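/- arXiv:2511.02585 — 5 statements merged into one kernel-verified Lean document; each statement's English description precedes it below -/
import Mathlib

section
/- For every integer q with 1 ≤ q ≤ m, the Knutson–Tao classes ξ⁺_q and ξ⁻_q belong to H_m; that is, for every pair s, t ∈ V_m with |s| > |t| and |s| − |t| odd, the polynomial w(s) − w(t) divides both ξ⁺_q(s) − ξ⁺_q(t) and ξ⁻_q(s) − ξ⁻_q(t) in ℚ[α,δ]. (In particular, together with the constant class ξ⁰, all Knutson–Tao classes define elements of the GKM ring H_m.) -/
noncomputable section

open Finset MvPolynomial

/-- The coefficient ring `R = ℚ[α,δ]`, realized as polynomials in two variables. -/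
abbrev Rpoly : Type := MvPolynomial (Fin 2) ℚ

/-- The variable `α`. -/
def va : Rpoly := X 0

/-- The variable `δ`. -/
def vd : Rpoly := X 1

/-- `P⁻(a,b) = ∏_{k=a}^{b} (−α + k·δ)`. -/
def Pneg (a b : ℤ) : Rpoly :=
  ∏ k ∈ Finset.Icc a b, (-va + MvPolynomial.C (k : ℚ) * vd)

/-- `P⁺(a,b) = ∏_{k=a}^{b} (α + k·δ)`. -/
def Ppos (a b : ℤ) : Rpoly :=
  ∏ k ∈ Finset.Icc a b, (va + MvPolynomial.C (k : ℚ) * vd)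

/-- Binomial coefficient `C(n,q)` (all uses have `n ≥ 0`). -/
def B (n : ℤ) (q : ℕ) : ℚ := (n.toNat).choose q

/-- The Knutson–Tao class `ξ⁺_q = ξ(m+q, m−q)`, as a function on vertices `t`
(the vertex `t` encodes the pair `(m+t, m−t)`). -/
def xiP (m : ℤ) (q : ℕ) (t : ℤ) : Rpoly :=
  if (q : ℤ) ≤ t ∧ t ≤ m then
    MvPolynomial.C (B (⌈((t : ℚ) - (q : ℚ) + 1) / 2⌉ + q - 1) q) *
      Pneg (⌈((t : ℚ) - (q : ℚ) + 1) / 2⌉ - 1) (⌈((t : ℚ) - (q : ℚ) + 1) / 2⌉ + q - 2)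
  else if -m ≤ t ∧ t ≤ -((q : ℤ) + 1) then
    MvPolynomial.C (B (⌈(-(t : ℚ) - (q : ℚ)) / 2⌉ + q - 1) q) *
      Ppos (⌈(-(t : ℚ) - (q : ℚ)) / 2⌉ + 1) (⌈(-(t : ℚ) - (q : ℚ)) / 2⌉ + q)
  else 0

/-- The Knutson–Tao class `ξ⁻_q = ξ(m−q, m+q)`. -/
def xiM (m : ℤ) (q : ℕ) (t : ℤ) : Rpoly :=
  if (q : ℤ) + 1 ≤ t ∧ t ≤ m then
    MvPolynomial.C (B (⌈((t : ℚ) - (q : ℚ)) / 2⌉ + q - 1) q) *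
      Pneg (⌈((t : ℚ) - (q : ℚ)) / 2⌉) (⌈((t : ℚ) - (q : ℚ)) / 2⌉ + q - 1)
  else if -m ≤ t ∧ t ≤ -(q : ℤ) then
    MvPolynomial.C (B (⌈(-(t : ℚ) - (q : ℚ) + 1) / 2⌉ + q - 1) q) *
      Ppos (⌈(-(t : ℚ) - (q : ℚ) + 1) / 2⌉) (⌈(-(t : ℚ) - (q : ℚ) + 1) / 2⌉ + q - 1)
  else 0

/-- The weight of the vertex `t`: `w(t) = ((1−2t)/2)·α + (t(t−1)/2)·δ`. -/
def w (t : ℤ) : Rpoly :=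
  MvPolynomial.C ((1 - 2 * (t : ℚ)) / 2) * va +
    MvPolynomial.C (((t : ℚ) * ((t : ℚ) - 1)) / 2) * vd

/-! ### Auxiliary material -/

section Aux

/-- Ceiling of `n/2` as an integer division. -/
lemma KT.ceil2 (n : ℤ) : ⌈(n : ℚ) / 2⌉ = (n + 1) / 2 := by
  obtain ⟨c, hc | hc⟩ : ∃ c, n = 2*c ∨ n = 2*c - 1 := ⟨(n+1)/2, by omega⟩
  · subst hc
    rw [show ((2*c : ℤ) : ℚ) / 2 = (c : ℚ) by push_cast; ring, Int.ceil_intCast]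
    omega
  · subst hc
    have h : ⌈((2*c - 1 : ℤ) : ℚ) / 2⌉ = c := by
      rw [Int.ceil_eq_iff]
      constructor <;> push_cast <;> linarith
    rw [h]; omega

/-- Rising factorial with `q` factors, starting at `x`. -/
def KT.asc (q : ℕ) (x : ℚ) : ℚ := ∏ i ∈ Finset.range q, (x + i)

lemma KT.asc_neg (q : ℕ) (x : ℚ) : KT.asc q (-x - q + 1) = (-1)^q * KT.asc q x := by
  unfold KT.asc
  rw [show ((-1:ℚ))^q = ∏ _i ∈ Finset.range q, (-1:ℚ) by simp, ← Finset.prod_mul_distrib]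
  rw [← Finset.prod_range_reflect (fun i => -x - q + 1 + i) q]
  apply Finset.prod_congr rfl
  intro i hi
  rw [Finset.mem_range] at hi
  have h2 : ((q - 1 - i : ℕ) : ℚ) = (q:ℚ) - 1 - i := by
    have h1 : (q - 1 - i : ℕ) = q - (i+1) := by omega
    rw [h1, Nat.cast_sub (by omega)]
    push_cast; ring
  simp only [h2]
  ring

lemma KT.asc_neg_int (q : ℕ) (x : ℤ) :
    KT.asc q ((-x - (q:ℤ) + 1 : ℤ) : ℚ) = (-1)^q * KT.asc q ((x : ℤ) : ℚ) := by
  rw [show ((-x - (q:ℤ) + 1 : ℤ) : ℚ) = -((x:ℤ):ℚ) - (q:ℚ) + 1 by push_cast; ring, KT.asc_neg]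

lemma KT.asc_int_eq_zero (q : ℕ) (n : ℤ) (h1 : -(q:ℤ) + 1 ≤ n) (h2 : n ≤ 0) :
    KT.asc q ((n : ℤ) : ℚ) = 0 := by
  unfold KT.asc
  refine Finset.prod_eq_zero (i := (-n).toNat) (Finset.mem_range.mpr (by omega)) ?_
  have h3 : (((-n).toNat : ℕ) : ℚ) = -((n:ℤ):ℚ) := by
    have h4 : ((-n).toNat : ℤ) = -n := Int.toNat_of_nonneg (by omega)
    exact_mod_cast congrArg (Int.cast : ℤ → ℚ) h4
  rw [h3]; ring

lemma KT.asc_nat (q n : ℕ) : KT.asc q (n : ℚ) = (n.ascFactorial q : ℚ) := by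
  induction q with
  | zero => simp [KT.asc]
  | succ p ih =>
    simp only [KT.asc, Finset.prod_range_succ] at *
    rw [ih, Nat.ascFactorial_succ]
    push_cast; ring

lemma KT.B_mul_factorial (q : ℕ) (a : ℤ) (ha : 1 ≤ a) :
    B (a + q - 1) q * (Nat.factorial q : ℚ) = KT.asc q ((a : ℤ) : ℚ) := by
  obtain ⟨n, rfl⟩ : ∃ n : ℕ, a = (n:ℤ) + 1 := ⟨(a-1).toNat, by omega⟩
  have h1 : ((n:ℤ) + 1 + q - 1).toNat = n + q := by omega
  unfold B
  rw [h1, show (((n:ℤ) + 1 : ℤ) : ℚ) = ((n+1 : ℕ) : ℚ) by push_cast; ring, KT.asc_nat,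
    Nat.ascFactorial_eq_factorial_mul_choose]
  push_cast; ring

lemma KT.B_eq_asc (q : ℕ) (a : ℤ) (ha : 1 ≤ a) :
    B (a + q - 1) q = KT.asc q ((a : ℤ) : ℚ) / (Nat.factorial q : ℚ) := by
  rw [eq_div_iff (by positivity)]
  exact KT.B_mul_factorial q a ha

lemma KT.Icc_eq_image (a : ℤ) (q : ℕ) :
    Finset.Icc a (a + q - 1) = (Finset.range q).image (fun i : ℕ => a + (i : ℤ)) := by
  ext x
  simp only [Finset.mem_Icc, Finset.mem_image, Finset.mem_range]
  constructor
  · intro h; exact ⟨(x - a).toNat, by omega, by omega⟩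
  · rintro ⟨i, hi, rfl⟩; omega

lemma KT.prod_Icc_sub (q : ℕ) (a k : ℤ) :
    ∏ j ∈ Finset.Icc a (a + q - 1), ((j:ℚ) - (k:ℚ)) = KT.asc q ((a - k : ℤ) : ℚ) := by
  rw [KT.Icc_eq_image, Finset.prod_image (fun i _ j _ h => by omega)]
  unfold KT.asc
  apply Finset.prod_congr rfl
  intro i _
  push_cast; ring

lemma KT.prod_Icc_add (q : ℕ) (a k : ℤ) :
    ∏ j ∈ Finset.Icc a (a + q - 1), ((j:ℚ) + (k:ℚ)) = KT.asc q ((a + k : ℤ) : ℚ) := by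
  rw [KT.Icc_eq_image, Finset.prod_image (fun i _ j _ h => by omega)]
  unfold KT.asc
  apply Finset.prod_congr rfl
  intro i _
  push_cast; ring

lemma KT.prod_Icc_sub' (q : ℕ) (a b k : ℤ) (h : b = a + q - 1) :
    ∏ j ∈ Finset.Icc a b, ((j:ℚ) - (k:ℚ)) = KT.asc q ((a - k : ℤ) : ℚ) := by
  subst h; exact KT.prod_Icc_sub q a k

lemma KT.prod_Icc_add' (q : ℕ) (a b k : ℤ) (h : b = a + q - 1) :
    ∏ j ∈ Finset.Icc a b, ((j:ℚ) + (k:ℚ)) = KT.asc q ((a + k : ℤ) : ℚ) := by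
  subst h; exact KT.prod_Icc_add q a k

lemma KT.dvd_prod_sub_prod (a : Rpoly) (S : Finset ℤ) (f : ℤ → Rpoly) :
    a ∣ (∏ i ∈ S, (a + f i)) - ∏ i ∈ S, f i := by
  classical
  induction S using Finset.induction_on with
  | empty => simp
  | @insert i S hi ih =>
    rw [Finset.prod_insert hi, Finset.prod_insert hi]
    have h : (a + f i) * ∏ x ∈ S, (a + f x) - f i * ∏ x ∈ S, f x
        = a * ∏ x ∈ S, (a + f x) + f i * ((∏ x ∈ S, (a + f x)) - ∏ x ∈ S, f x) := by ring
    rw [h]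
    exact dvd_add (dvd_mul_right a _) (ih.mul_left _)

lemma KT.Pneg_cong (k a b : ℤ) :
    (-va + C (k:ℚ) * vd) ∣
      Pneg a b - C (∏ j ∈ Finset.Icc a b, ((j:ℚ) - (k:ℚ))) * vd ^ (Finset.Icc a b).card := by
  have h1 : Pneg a b = ∏ j ∈ Finset.Icc a b, ((-va + C (k:ℚ) * vd) + C ((j:ℚ) - (k:ℚ)) * vd) := by
    apply Finset.prod_congr rfl
    intro j _
    rw [C_sub]; ring
  have h2 : (C (∏ j ∈ Finset.Icc a b, ((j:ℚ) - (k:ℚ))) : Rpoly) * vd ^ (Finset.Icc a b).card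
      = ∏ j ∈ Finset.Icc a b, (C ((j:ℚ) - (k:ℚ)) * vd) := by
    rw [Finset.prod_mul_distrib, Finset.prod_const, map_prod]
  rw [h1, h2]
  exact KT.dvd_prod_sub_prod _ _ _

lemma KT.Ppos_cong (k a b : ℤ) :
    (-va + C (k:ℚ) * vd) ∣
      Ppos a b - C (∏ j ∈ Finset.Icc a b, ((j:ℚ) + (k:ℚ))) * vd ^ (Finset.Icc a b).card := by
  rw [← neg_dvd]
  have h1 : Ppos a b
      = ∏ j ∈ Finset.Icc a b, ((-(-va + C (k:ℚ) * vd)) + C ((j:ℚ) + (k:ℚ)) * vd) := by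
    apply Finset.prod_congr rfl
    intro j _
    rw [C_add]; ring
  have h2 : (C (∏ j ∈ Finset.Icc a b, ((j:ℚ) + (k:ℚ))) : Rpoly) * vd ^ (Finset.Icc a b).card
      = ∏ j ∈ Finset.Icc a b, (C ((j:ℚ) + (k:ℚ)) * vd) := by
    rw [Finset.prod_mul_distrib, Finset.prod_const, map_prod]
  rw [h1, h2]
  exact KT.dvd_prod_sub_prod _ _ _

/-- The scalar shadow of `xiP` under the evaluation `α ↦ k·δ`, divided by `δ^q`. -/
def KT.gP (m : ℤ) (q : ℕ) (k t : ℤ) : ℚ :=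
  if (q : ℤ) ≤ t ∧ t ≤ m then
    B (⌈((t : ℚ) - (q : ℚ) + 1) / 2⌉ + q - 1) q *
      ∏ j ∈ Finset.Icc (⌈((t : ℚ) - (q : ℚ) + 1) / 2⌉ - 1) (⌈((t : ℚ) - (q : ℚ) + 1) / 2⌉ + q - 2),
        ((j:ℚ) - (k:ℚ))
  else if -m ≤ t ∧ t ≤ -((q : ℤ) + 1) then
    B (⌈(-(t : ℚ) - (q : ℚ)) / 2⌉ + q - 1) q *
      ∏ j ∈ Finset.Icc (⌈(-(t : ℚ) - (q : ℚ)) / 2⌉ + 1) (⌈(-(t : ℚ) - (q : ℚ)) / 2⌉ + q),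
        ((j:ℚ) + (k:ℚ))
  else 0

/-- The scalar shadow of `xiM` under the evaluation `α ↦ k·δ`, divided by `δ^q`. -/
def KT.gM (m : ℤ) (q : ℕ) (k t : ℤ) : ℚ :=
  if (q : ℤ) + 1 ≤ t ∧ t ≤ m then
    B (⌈((t : ℚ) - (q : ℚ)) / 2⌉ + q - 1) q *
      ∏ j ∈ Finset.Icc (⌈((t : ℚ) - (q : ℚ)) / 2⌉) (⌈((t : ℚ) - (q : ℚ)) / 2⌉ + q - 1),
        ((j:ℚ) - (k:ℚ))
  else if -m ≤ t ∧ t ≤ -(q : ℤ) then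
    B (⌈(-(t : ℚ) - (q : ℚ) + 1) / 2⌉ + q - 1) q *
      ∏ j ∈ Finset.Icc (⌈(-(t : ℚ) - (q : ℚ) + 1) / 2⌉) (⌈(-(t : ℚ) - (q : ℚ) + 1) / 2⌉ + q - 1),
        ((j:ℚ) + (k:ℚ))
  else 0

lemma KT.xiP_cong (m : ℤ) (q : ℕ) (k t : ℤ) :
    (-va + C (k:ℚ) * vd) ∣ xiP m q t - C (KT.gP m q k t) * vd ^ q := by
  unfold xiP KT.gP
  split_ifs with h1 h2
  · generalize ⌈((t : ℚ) - (q : ℚ) + 1) / 2⌉ = c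
    have hcard : (Finset.Icc (c - 1) (c + (q:ℤ) - 2)).card = q := by
      rw [Int.card_Icc]; omega
    have key : C (B (c + q - 1) q) * Pneg (c-1) (c + q - 2) -
        C (B (c + q - 1) q * ∏ j ∈ Finset.Icc (c-1) (c + q - 2), ((j:ℚ) - (k:ℚ))) * vd ^ q
        = C (B (c + q - 1) q) * (Pneg (c-1) (c+q-2) -
            C (∏ j ∈ Finset.Icc (c-1) (c + q - 2), ((j:ℚ) - (k:ℚ)))
              * vd ^ (Finset.Icc (c-1) (c + q - 2)).card) := by
      rw [hcard, map_mul]; ring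
    rw [key]
    exact (KT.Pneg_cong k _ _).mul_left _
  · generalize ⌈(-(t : ℚ) - (q : ℚ)) / 2⌉ = c
    have hcard : (Finset.Icc (c + 1) (c + (q:ℤ))).card = q := by
      rw [Int.card_Icc]; omega
    have key : C (B (c + q - 1) q) * Ppos (c+1) (c + q) -
        C (B (c + q - 1) q * ∏ j ∈ Finset.Icc (c+1) (c + q), ((j:ℚ) + (k:ℚ))) * vd ^ q
        = C (B (c + q - 1) q) * (Ppos (c+1) (c+q) -
            C (∏ j ∈ Finset.Icc (c+1) (c + q), ((j:ℚ) + (k:ℚ)))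
              * vd ^ (Finset.Icc (c+1) (c + q)).card) := by
      rw [hcard, map_mul]; ring
    rw [key]
    exact (KT.Ppos_cong k _ _).mul_left _
  · simp

lemma KT.xiM_cong (m : ℤ) (q : ℕ) (k t : ℤ) :
    (-va + C (k:ℚ) * vd) ∣ xiM m q t - C (KT.gM m q k t) * vd ^ q := by
  unfold xiM KT.gM
  split_ifs with h1 h2
  · generalize ⌈((t : ℚ) - (q : ℚ)) / 2⌉ = c
    have hcard : (Finset.Icc c (c + (q:ℤ) - 1)).card = q := by
      rw [Int.card_Icc]; omega
    have key : C (B (c + q - 1) q) * Pneg c (c + q - 1) -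
        C (B (c + q - 1) q * ∏ j ∈ Finset.Icc c (c + q - 1), ((j:ℚ) - (k:ℚ))) * vd ^ q
        = C (B (c + q - 1) q) * (Pneg c (c+q-1) -
            C (∏ j ∈ Finset.Icc c (c + q - 1), ((j:ℚ) - (k:ℚ)))
              * vd ^ (Finset.Icc c (c + q - 1)).card) := by
      rw [hcard, map_mul]; ring
    rw [key]
    exact (KT.Pneg_cong k _ _).mul_left _
  · generalize ⌈(-(t : ℚ) - (q : ℚ) + 1) / 2⌉ = c
    have hcard : (Finset.Icc c (c + (q:ℤ) - 1)).card = q := by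
      rw [Int.card_Icc]; omega
    have key : C (B (c + q - 1) q) * Ppos c (c + q - 1) -
        C (B (c + q - 1) q * ∏ j ∈ Finset.Icc c (c + q - 1), ((j:ℚ) + (k:ℚ))) * vd ^ q
        = C (B (c + q - 1) q) * (Ppos c (c+q-1) -
            C (∏ j ∈ Finset.Icc c (c + q - 1), ((j:ℚ) + (k:ℚ)))
              * vd ^ (Finset.Icc c (c + q - 1)).card) := by
      rw [hcard, map_mul]; ring
    rw [key]
    exact (KT.Ppos_cong k _ _).mul_left _
  · simp

lemma KT.gP_symm_core (m : ℤ) (q : ℕ) (hq : 1 ≤ q) (k s t : ℤ)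
    (hst : s + t = 2*k + 1) (hts : t < s)
    (hs1 : -m ≤ s) (hs2 : s ≤ m) (ht1 : -m ≤ t) (ht2 : t ≤ m) :
    KT.gP m q k s = KT.gP m q k t := by
  have hq' : (1:ℤ) ≤ (q:ℤ) := by exact_mod_cast hq
  have Hs1 : ⌈((s:ℚ) - (q:ℚ) + 1)/2⌉ = (s - (q:ℤ) + 2)/2 := by
    rw [show ((s:ℚ) - (q:ℚ) + 1) = ((s - (q:ℤ) + 1 : ℤ) : ℚ) by push_cast; ring, KT.ceil2]
    omega
  have Hs2 : ⌈(-(s:ℚ) - (q:ℚ))/2⌉ = (-s - (q:ℤ) + 1)/2 := by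
    rw [show (-(s:ℚ) - (q:ℚ)) = ((-s - (q:ℤ) : ℤ) : ℚ) by push_cast; ring, KT.ceil2]
  have Ht1 : ⌈((t:ℚ) - (q:ℚ) + 1)/2⌉ = (t - (q:ℤ) + 2)/2 := by
    rw [show ((t:ℚ) - (q:ℚ) + 1) = ((t - (q:ℤ) + 1 : ℤ) : ℚ) by push_cast; ring, KT.ceil2]
    omega
  have Ht2 : ⌈(-(t:ℚ) - (q:ℚ))/2⌉ = (-t - (q:ℤ) + 1)/2 := by
    rw [show (-(t:ℚ) - (q:ℚ)) = ((-t - (q:ℤ) : ℤ) : ℚ) by push_cast; ring, KT.ceil2]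
  have hfac : ((-1:ℚ))^q * ((-1:ℚ))^q = 1 := by
    rw [← pow_add]; exact Even.neg_one_pow ⟨q, rfl⟩
  by_cases hsP : (q:ℤ) ≤ s
  · by_cases htP : (q:ℤ) ≤ t
    · -- both in positive region
      unfold KT.gP
      rw [if_pos ⟨hsP, hs2⟩, if_pos ⟨htP, ht2⟩, Hs1, Ht1]
      set A := (s - (q:ℤ) + 2)/2 with hA
      set A' := (t - (q:ℤ) + 2)/2 with hA'
      rw [KT.prod_Icc_sub' q (A - 1) (A + (q:ℤ) - 2) k (by ring),
          KT.prod_Icc_sub' q (A' - 1) (A' + (q:ℤ) - 2) k (by ring),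
          KT.B_eq_asc q A (by omega), KT.B_eq_asc q A' (by omega),
          show A' = -(A - 1 - k) - (q:ℤ) + 1 by omega,
          show -(A - 1 - k) - (q:ℤ) + 1 - 1 - k = -A - (q:ℤ) + 1 by ring,
          KT.asc_neg_int, KT.asc_neg_int]
      have hexp : ((-1:ℚ))^q * KT.asc q (((A - 1 - k : ℤ)):ℚ) / (Nat.factorial q : ℚ)
            * (((-1:ℚ))^q * KT.asc q ((A:ℤ):ℚ))
          = (((-1:ℚ))^q * ((-1:ℚ))^q)
            * (KT.asc q ((A:ℤ):ℚ) / (Nat.factorial q : ℚ)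
                * KT.asc q (((A - 1 - k : ℤ)):ℚ)) := by ring
      rw [hexp, hfac, one_mul]
    · by_cases htN : t ≤ -((q:ℤ)+1)
      · -- s positive, t negative region
        unfold KT.gP
        rw [if_pos ⟨hsP, hs2⟩, if_neg (by omega), if_pos ⟨ht1, htN⟩, Hs1, Ht2]
        set A := (s - (q:ℤ) + 2)/2 with hA
        set A2 := (-t - (q:ℤ) + 1)/2 with hA2
        rw [KT.prod_Icc_sub' q (A - 1) (A + (q:ℤ) - 2) k (by ring),
            KT.prod_Icc_add' q (A2 + 1) (A2 + (q:ℤ)) k (by ring),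
            KT.B_eq_asc q A (by omega), KT.B_eq_asc q A2 (by omega),
            show A2 = A - 1 - k by omega,
            show A - 1 - k + 1 + k = A by ring]
        ring
      · -- s positive, t in zero region
        unfold KT.gP
        rw [if_pos ⟨hsP, hs2⟩, if_neg (by omega), if_neg (by omega), Hs1]
        set A := (s - (q:ℤ) + 2)/2 with hA
        rw [KT.prod_Icc_sub' q (A - 1) (A + (q:ℤ) - 2) k (by ring),
            KT.asc_int_eq_zero q (A - 1 - k) (by omega) (by omega), mul_zero]
  · by_cases hsN : s ≤ -((q:ℤ)+1)
    · -- both in negative region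
      unfold KT.gP
      rw [if_neg (by omega), if_pos ⟨hs1, hsN⟩, if_neg (by omega),
          if_pos ⟨ht1, by omega⟩, Hs2, Ht2]
      set As := (-s - (q:ℤ) + 1)/2 with hAs
      set At := (-t - (q:ℤ) + 1)/2 with hAt
      rw [KT.prod_Icc_add' q (As + 1) (As + (q:ℤ)) k (by ring),
          KT.prod_Icc_add' q (At + 1) (At + (q:ℤ)) k (by ring),
          KT.B_eq_asc q As (by omega), KT.B_eq_asc q At (by omega),
          show At = -(As + 1 + k) - (q:ℤ) + 1 by omega,
          show -(As + 1 + k) - (q:ℤ) + 1 + 1 + k = -As - (q:ℤ) + 1 by ring,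
          KT.asc_neg_int, KT.asc_neg_int]
      have hexp : ((-1:ℚ))^q * KT.asc q (((As + 1 + k : ℤ)):ℚ) / (Nat.factorial q : ℚ)
            * (((-1:ℚ))^q * KT.asc q ((As:ℤ):ℚ))
          = (((-1:ℚ))^q * ((-1:ℚ))^q)
            * (KT.asc q ((As:ℤ):ℚ) / (Nat.factorial q : ℚ)
                * KT.asc q (((As + 1 + k : ℤ)):ℚ)) := by ring
      rw [hexp, hfac, one_mul]
    · by_cases htN : t ≤ -((q:ℤ)+1)
      · -- s in zero region, t negative
        unfold KT.gP
        rw [if_neg (by omega), if_neg (by omega), if_neg (by omega), if_pos ⟨ht1, htN⟩, Ht2]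
        set At := (-t - (q:ℤ) + 1)/2 with hAt
        rw [KT.prod_Icc_add' q (At + 1) (At + (q:ℤ)) k (by ring),
            KT.asc_int_eq_zero q (At + 1 + k) (by omega) (by omega), mul_zero]
      · -- both in zero region
        unfold KT.gP
        rw [if_neg (by omega), if_neg (by omega), if_neg (by omega), if_neg (by omega)]

lemma KT.gM_symm_core (m : ℤ) (q : ℕ) (hq : 1 ≤ q) (k s t : ℤ)
    (hst : s + t = 2*k + 1) (hts : t < s)
    (hs1 : -m ≤ s) (hs2 : s ≤ m) (ht1 : -m ≤ t) (ht2 : t ≤ m) :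
    KT.gM m q k s = KT.gM m q k t := by
  have hq' : (1:ℤ) ≤ (q:ℤ) := by exact_mod_cast hq
  have Hs1 : ⌈((s:ℚ) - (q:ℚ))/2⌉ = (s - (q:ℤ) + 1)/2 := by
    rw [show ((s:ℚ) - (q:ℚ)) = ((s - (q:ℤ) : ℤ) : ℚ) by push_cast; ring, KT.ceil2]
  have Hs2 : ⌈(-(s:ℚ) - (q:ℚ) + 1)/2⌉ = (-s - (q:ℤ) + 2)/2 := by
    rw [show (-(s:ℚ) - (q:ℚ) + 1) = ((-s - (q:ℤ) + 1 : ℤ) : ℚ) by push_cast; ring, KT.ceil2]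
    omega
  have Ht1 : ⌈((t:ℚ) - (q:ℚ))/2⌉ = (t - (q:ℤ) + 1)/2 := by
    rw [show ((t:ℚ) - (q:ℚ)) = ((t - (q:ℤ) : ℤ) : ℚ) by push_cast; ring, KT.ceil2]
  have Ht2 : ⌈(-(t:ℚ) - (q:ℚ) + 1)/2⌉ = (-t - (q:ℤ) + 2)/2 := by
    rw [show (-(t:ℚ) - (q:ℚ) + 1) = ((-t - (q:ℤ) + 1 : ℤ) : ℚ) by push_cast; ring, KT.ceil2]
    omega
  have hfac : ((-1:ℚ))^q * ((-1:ℚ))^q = 1 := by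
    rw [← pow_add]; exact Even.neg_one_pow ⟨q, rfl⟩
  by_cases hsP : (q:ℤ) + 1 ≤ s
  · by_cases htP : (q:ℤ) + 1 ≤ t
    · -- both in positive region
      unfold KT.gM
      rw [if_pos ⟨hsP, hs2⟩, if_pos ⟨htP, ht2⟩, Hs1, Ht1]
      set A := (s - (q:ℤ) + 1)/2 with hA
      set A' := (t - (q:ℤ) + 1)/2 with hA'
      rw [KT.prod_Icc_sub, KT.prod_Icc_sub,
          KT.B_eq_asc q A (by omega), KT.B_eq_asc q A' (by omega),
          show A' = -(A - k) - (q:ℤ) + 1 by omega,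
          show -(A - k) - (q:ℤ) + 1 - k = -A - (q:ℤ) + 1 by ring,
          KT.asc_neg_int, KT.asc_neg_int]
      have hexp : ((-1:ℚ))^q * KT.asc q (((A - k : ℤ)):ℚ) / (Nat.factorial q : ℚ)
            * (((-1:ℚ))^q * KT.asc q ((A:ℤ):ℚ))
          = (((-1:ℚ))^q * ((-1:ℚ))^q)
            * (KT.asc q ((A:ℤ):ℚ) / (Nat.factorial q : ℚ)
                * KT.asc q (((A - k : ℤ)):ℚ)) := by ring
      rw [hexp, hfac, one_mul]
    · by_cases htN : t ≤ -(q:ℤ)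
      · -- s positive, t negative region
        unfold KT.gM
        rw [if_pos ⟨hsP, hs2⟩, if_neg (by omega), if_pos ⟨ht1, htN⟩, Hs1, Ht2]
        set A := (s - (q:ℤ) + 1)/2 with hA
        set A2 := (-t - (q:ℤ) + 2)/2 with hA2
        rw [KT.prod_Icc_sub, KT.prod_Icc_add,
            KT.B_eq_asc q A (by omega), KT.B_eq_asc q A2 (by omega),
            show A2 = A - k by omega,
            show A - k + k = A by ring]
        ring
      · -- s positive, t in zero region
        unfold KT.gM
        rw [if_pos ⟨hsP, hs2⟩, if_neg (by omega), if_neg (by omega), Hs1]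
        set A := (s - (q:ℤ) + 1)/2 with hA
        rw [KT.prod_Icc_sub,
            KT.asc_int_eq_zero q (A - k) (by omega) (by omega), mul_zero]
  · by_cases hsN : s ≤ -(q:ℤ)
    · -- both in negative region
      unfold KT.gM
      rw [if_neg (by omega), if_pos ⟨hs1, hsN⟩, if_neg (by omega),
          if_pos ⟨ht1, by omega⟩, Hs2, Ht2]
      set As := (-s - (q:ℤ) + 2)/2 with hAs
      set At := (-t - (q:ℤ) + 2)/2 with hAt
      rw [KT.prod_Icc_add, KT.prod_Icc_add,
          KT.B_eq_asc q As (by omega), KT.B_eq_asc q At (by omega),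
          show At = -(As + k) - (q:ℤ) + 1 by omega,
          show -(As + k) - (q:ℤ) + 1 + k = -As - (q:ℤ) + 1 by ring,
          KT.asc_neg_int, KT.asc_neg_int]
      have hexp : ((-1:ℚ))^q * KT.asc q (((As + k : ℤ)):ℚ) / (Nat.factorial q : ℚ)
            * (((-1:ℚ))^q * KT.asc q ((As:ℤ):ℚ))
          = (((-1:ℚ))^q * ((-1:ℚ))^q)
            * (KT.asc q ((As:ℤ):ℚ) / (Nat.factorial q : ℚ)
                * KT.asc q (((As + k : ℤ)):ℚ)) := by ring
      rw [hexp, hfac, one_mul]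
    · by_cases htN : t ≤ -(q:ℤ)
      · -- s in zero region, t negative
        unfold KT.gM
        rw [if_neg (by omega), if_neg (by omega), if_neg (by omega), if_pos ⟨ht1, htN⟩, Ht2]
        set At := (-t - (q:ℤ) + 2)/2 with hAt
        rw [KT.prod_Icc_add,
            KT.asc_int_eq_zero q (At + k) (by omega) (by omega), mul_zero]
      · -- both in zero region
        unfold KT.gM
        rw [if_neg (by omega), if_neg (by omega), if_neg (by omega), if_neg (by omega)]

lemma KT.gP_symm (m : ℤ) (q : ℕ) (hq : 1 ≤ q) (k s t : ℤ)
    (hst : s + t = 2*k + 1)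
    (hs1 : -m ≤ s) (hs2 : s ≤ m) (ht1 : -m ≤ t) (ht2 : t ≤ m) :
    KT.gP m q k s = KT.gP m q k t := by
  rcases lt_trichotomy t s with h | h | h
  · exact KT.gP_symm_core m q hq k s t hst h hs1 hs2 ht1 ht2
  · rw [h]
  · exact (KT.gP_symm_core m q hq k t s (by omega) h ht1 ht2 hs1 hs2).symm

lemma KT.gM_symm (m : ℤ) (q : ℕ) (hq : 1 ≤ q) (k s t : ℤ)
    (hst : s + t = 2*k + 1)
    (hs1 : -m ≤ s) (hs2 : s ≤ m) (ht1 : -m ≤ t) (ht2 : t ≤ m) :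
    KT.gM m q k s = KT.gM m q k t := by
  rcases lt_trichotomy t s with h | h | h
  · exact KT.gM_symm_core m q hq k s t hst h hs1 hs2 ht1 ht2
  · rw [h]
  · exact (KT.gM_symm_core m q hq k t s (by omega) h ht1 ht2 hs1 hs2).symm

end Aux

/-- for `1 ≤ q ≤ m`, the Knutson–Tao classes `ξ⁺_q` and `ξ⁻_q` satisfy
the GKM congruence relations of the moment graph `G_m`, i.e. belong to `H_m`. -/
theorem statement0 (m : ℕ) (hm : 1 ≤ m) (q : ℕ) (hq1 : 1 ≤ q) (hq2 : q ≤ m)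
    (s t : ℤ) (hs1 : -(m : ℤ) ≤ s) (hs2 : s ≤ (m : ℤ))
    (ht1 : -(m : ℤ) ≤ t) (ht2 : t ≤ (m : ℤ))
    (hlt : |t| < |s|) (hodd : Odd (|s| - |t|)) :
    (w s - w t) ∣ (xiP m q s - xiP m q t) ∧ (w s - w t) ∣ (xiM m q s - xiM m q t) := by
  obtain ⟨k, hk⟩ : ∃ k : ℤ, s + t = 2*k + 1 := by
    obtain ⟨c, hc⟩ := hodd
    rcases abs_cases s with ⟨h1, _⟩ | ⟨h1, _⟩ <;> rcases abs_cases t with ⟨h2, _⟩ | ⟨h2, _⟩ <;>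
      exact ⟨(s + t - 1)/2, by omega⟩
  have hL : w s - w t = C ((s:ℚ) - (t:ℚ)) * (-va + C (k:ℚ) * vd) := by
    have hkq : (s:ℚ) + (t:ℚ) = 2*(k:ℚ) + 1 := by exact_mod_cast congrArg (Int.cast : ℤ → ℚ) hk
    have h1 : ((1 - 2*(s:ℚ))/2) - ((1 - 2*(t:ℚ))/2) = -((s:ℚ) - (t:ℚ)) := by ring
    have h2 : (((s:ℚ)*((s:ℚ)-1))/2) - (((t:ℚ)*((t:ℚ)-1))/2) = ((s:ℚ) - (t:ℚ)) * (k:ℚ) := by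
      linear_combination (((s:ℚ) - (t:ℚ))/2) * hkq
    calc w s - w t
        = C (((1 - 2*(s:ℚ))/2) - ((1 - 2*(t:ℚ))/2)) * va
          + C ((((s:ℚ)*((s:ℚ)-1))/2) - (((t:ℚ)*((t:ℚ)-1))/2)) * vd := by
          unfold w; rw [C_sub, C_sub]; ring
      _ = C (-((s:ℚ) - (t:ℚ))) * va + C (((s:ℚ) - (t:ℚ)) * (k:ℚ)) * vd := by rw [h1, h2]
      _ = C ((s:ℚ) - (t:ℚ)) * (-va + C (k:ℚ) * vd) := by rw [map_neg, map_mul]; ring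
  have hne : s ≠ t := by
    rcases abs_cases s with ⟨h1, _⟩ | ⟨h1, _⟩ <;> rcases abs_cases t with ⟨h2, _⟩ | ⟨h2, _⟩ <;> omega
  have hne0 : (s:ℚ) - (t:ℚ) ≠ 0 := by
    rw [sub_ne_zero]
    exact_mod_cast hne
  have hu : IsUnit (C ((s:ℚ) - (t:ℚ)) : Rpoly) := by
    refine isUnit_iff_exists_inv.mpr ⟨C (((s:ℚ) - (t:ℚ))⁻¹), ?_⟩
    rw [← map_mul, mul_inv_cancel₀ hne0, map_one]
  rw [hL]
  constructor
  · rw [hu.mul_left_dvd]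
    have d1 := KT.xiP_cong (m:ℤ) q k s
    have d2 := KT.xiP_cong (m:ℤ) q k t
    have d3 : KT.gP (m:ℤ) q k s = KT.gP (m:ℤ) q k t :=
      KT.gP_symm (m:ℤ) q hq1 k s t hk hs1 hs2 ht1 ht2
    have e : xiP m q s - xiP m q t =
        (xiP m q s - C (KT.gP (m:ℤ) q k s) * vd ^ q)
          - (xiP m q t - C (KT.gP (m:ℤ) q k t) * vd ^ q) := by
      rw [d3]; ring
    rw [e]
    exact dvd_sub d1 d2
  · rw [hu.mul_left_dvd]
    have d1 := KT.xiM_cong (m:ℤ) q k s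
    have d2 := KT.xiM_cong (m:ℤ) q k t
    have d3 : KT.gM (m:ℤ) q k s = KT.gM (m:ℤ) q k t :=
      KT.gM_symm (m:ℤ) q hq1 k s t hk hs1 hs2 ht1 ht2
    have e : xiM m q s - xiM m q t =
        (xiM m q s - C (KT.gM (m:ℤ) q k s) * vd ^ q)
          - (xiM m q t - C (KT.gM (m:ℤ) q k t) * vd ^ q) := by
      rw [d3]; ring
    rw [e]
    exact dvd_sub d1 d2
end
end

section
/- Assume m ≥ 2. Then for every t ∈ V_m one has ξ⁺_1(t)·ξ⁻_1(t) = ξ⁺_2(t) + ξ⁻_2(t); that is, the pointwise product of the two degree-two Knutson–Tao classes equals the sum of the two degree-four Knutson–Tao classes. -/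
noncomputable section

open Finset MvPolynomial

lemma ceil_intQ (n : ℤ) : ⌈(n:ℚ)⌉ = n := Int.ceil_intCast n
lemma ceil_add_half (n : ℤ) : ⌈(n:ℚ) + 1/2⌉ = n + 1 := by
  rw [show (n:ℚ) + 1/2 = 1/2 + n by ring, Int.ceil_add_intCast,
    show ⌈(1/2:ℚ)⌉ = 1 by rw [Int.ceil_eq_iff]; norm_num]
  omega
lemma ceil_sub_half (n : ℤ) : ⌈(n:ℚ) - 1/2⌉ = n := by
  rw [show (n:ℚ) - 1/2 = -1/2 + n by ring, Int.ceil_add_intCast,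
    show ⌈(-1/2:ℚ)⌉ = 0 by rw [Int.ceil_eq_iff]; norm_num]
  omega
lemma Pneg_single (a : ℤ) : Pneg a a = -va + MvPolynomial.C (a:ℚ) * vd := by
  rw [Pneg, Finset.Icc_self, Finset.prod_singleton]
lemma Pneg_pair (a : ℤ) : Pneg (a-1) a =
    (-va + MvPolynomial.C ((a:ℚ)-1) * vd) * (-va + MvPolynomial.C (a:ℚ) * vd) := by
  rw [Pneg, show Finset.Icc (a-1) a = {a-1, a} by ext x; simp [Finset.mem_Icc]; omega,
    Finset.prod_insert (by simp), Finset.prod_singleton]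
  push_cast; ring
lemma Pneg_pair' (a : ℤ) : Pneg a (a+1) =
    (-va + MvPolynomial.C (a:ℚ) * vd) * (-va + MvPolynomial.C ((a:ℚ)+1) * vd) := by
  have := Pneg_pair (a+1); rw [add_sub_cancel_right] at this; rw [this]; push_cast; ring
lemma Ppos_pair₂ (a : ℤ) : Ppos (a-1) a =
    (va + MvPolynomial.C ((a:ℚ)-1) * vd) * (va + MvPolynomial.C (a:ℚ) * vd) := by
  rw [Ppos, show Finset.Icc (a-1) a = {a-1, a} by ext x; simp [Finset.mem_Icc]; omega,
    Finset.prod_insert (by simp), Finset.prod_singleton]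
  push_cast; ring
lemma Ppos_single (a : ℤ) : Ppos a a = va + MvPolynomial.C (a:ℚ) * vd := by
  rw [Ppos, Finset.Icc_self, Finset.prod_singleton]
lemma Ppos_pair (a : ℤ) : Ppos a (a+1) =
    (va + MvPolynomial.C (a:ℚ) * vd) * (va + MvPolynomial.C ((a:ℚ)+1) * vd) := by
  rw [Ppos, show Finset.Icc a (a+1) = {a, a+1} by ext x; simp [Finset.mem_Icc]; omega,
    Finset.prod_insert (by simp), Finset.prod_singleton]
  push_cast; ring
lemma B_one {n : ℤ} (h : 0 ≤ n) : B n 1 = (n:ℚ) := by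
  rw [B, Nat.choose_one_right]
  exact_mod_cast congrArg (fun k : ℤ => (k:ℚ)) (Int.toNat_of_nonneg h)
lemma B_two {n : ℤ} (h : 0 ≤ n) : B n 2 = (n:ℚ) * ((n:ℚ)-1) / 2 := by
  rw [B, Nat.cast_choose_two]
  rw [show ((n.toNat : ℚ)) = (n:ℚ) by
    exact_mod_cast congrArg (fun k : ℤ => (k:ℚ)) (Int.toNat_of_nonneg h)]

/-- `ξ⁺_1 · ξ⁻_1 = ξ⁺_2 + ξ⁻_2` pointwise on `V_m`, for `m ≥ 2`. -/
theorem statement1 (m : ℕ) (hm : 2 ≤ m) (t : ℤ)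
    (ht1 : -(m : ℤ) ≤ t) (ht2 : t ≤ (m : ℤ)) :
    xiP m 1 t * xiM m 1 t = xiP m 2 t + xiM m 2 t := by
  obtain ⟨s, rfl | rfl⟩ := Int.even_or_odd' t
  · -- t = 2s
    rcases (by omega : 2 ≤ s ∨ s = 1 ∨ s = 0 ∨ s = -1 ∨ s ≤ -2) with hs | rfl | rfl | rfl | hs
    · simp only [xiP, xiM]
      rw [if_pos (show ((1:ℕ):ℤ) ≤ 2*s ∧ 2*s ≤ (m:ℤ) by omega),
          if_pos (show ((1:ℕ):ℤ) + 1 ≤ 2*s ∧ 2*s ≤ (m:ℤ) by omega),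
          if_pos (show ((2:ℕ):ℤ) ≤ 2*s ∧ 2*s ≤ (m:ℤ) by omega),
          if_pos (show ((2:ℕ):ℤ) + 1 ≤ 2*s ∧ 2*s ≤ (m:ℤ) by omega)]
      push_cast
      rw [show (2*(s:ℚ) - 1 + 1)/2 = ((s:ℤ):ℚ) by push_cast; ring,
          show (2*(s:ℚ) - 1)/2 = ((s:ℤ):ℚ) - 1/2 by push_cast; ring,
          show (2*(s:ℚ) - 2 + 1)/2 = ((s:ℤ):ℚ) - 1/2 by push_cast; ring,
          show (2*(s:ℚ) - 2)/2 = (((s-1):ℤ):ℚ) by push_cast; ring,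
          ceil_intQ, ceil_intQ, ceil_sub_half]
      rw [show s+1-1 = s by ring, show s+1-2 = s-1 by ring, show s+2-1 = s+1 by ring,
          show s+2-2 = s by ring, show s-1+2-1 = s by ring]
      rw [Pneg_single, Pneg_single, Pneg_pair, B_one (by omega : (0:ℤ) ≤ s)]
      have hC : (MvPolynomial.C (B (s+1) 2) : Rpoly) + MvPolynomial.C (B s 2)
          = MvPolynomial.C ((s:ℚ)) * MvPolynomial.C ((s:ℚ)) := by
        rw [← map_add, ← map_mul, show B (s+1) 2 + B s 2 = (s:ℚ) * (s:ℚ) by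
          rw [B_two (by omega), B_two (by omega)]; push_cast; ring]
      push_cast
      simp only [map_sub, map_one]
      linear_combination (-((-va + (MvPolynomial.C (s:ℚ) - 1) * vd)
        * (-va + MvPolynomial.C (s:ℚ) * vd))) * hC
    · simp only [xiP, xiM]
      rw [if_pos (show ((1:ℕ):ℤ) ≤ 2*1 ∧ 2*1 ≤ (m:ℤ) by omega),
          if_pos (show ((1:ℕ):ℤ) + 1 ≤ 2*1 ∧ 2*1 ≤ (m:ℤ) by omega),
          if_pos (show ((2:ℕ):ℤ) ≤ 2*1 ∧ 2*1 ≤ (m:ℤ) by omega),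
          if_neg (show ¬(((2:ℕ):ℤ) + 1 ≤ 2*1 ∧ 2*1 ≤ (m:ℤ)) by omega),
          if_neg (show ¬(-(m:ℤ) ≤ 2*1 ∧ 2*1 ≤ -((2:ℕ):ℤ)) by omega)]
      push_cast
      norm_num
      norm_num
      have h01 := Pneg_pair 1
      norm_num at h01
      rw [h01, Pneg_single, Pneg_single]
      norm_num [B, show ((2:ℤ).toNat).choose 2 = 1 from rfl]
    · -- t = 0
      simp only [xiP, xiM]
      rw [if_neg (by omega), if_neg (by omega), if_neg (by omega), if_neg (by omega),
          if_neg (by omega), if_neg (by omega), if_neg (by omega), if_neg (by omega)]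
      ring
    · -- t = -2
      simp only [xiP, xiM]
      rw [if_neg (by omega), if_pos (show -(m:ℤ) ≤ 2*(-1) ∧ 2*(-1) ≤ -(((1:ℕ):ℤ)+1) by omega),
          if_neg (by omega), if_pos (show -(m:ℤ) ≤ 2*(-1) ∧ 2*(-1) ≤ -((1:ℕ):ℤ) by omega),
          if_neg (by omega), if_neg (by omega),
          if_neg (by omega), if_pos (show -(m:ℤ) ≤ 2*(-1) ∧ 2*(-1) ≤ -((2:ℕ):ℤ) by omega)]
      push_cast
      norm_num
      norm_num
      rw [show (2:ℤ) = 1 + 1 from rfl, Ppos_pair 1, Ppos_single, Ppos_single]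
      norm_num [B, show ((2:ℤ).toNat).choose 2 = 1 from rfl]
      ring
    · -- t = 2s, s ≤ -2
      simp only [xiP, xiM]
      rw [if_neg (by omega), if_pos (show -(m:ℤ) ≤ 2*s ∧ 2*s ≤ -(((1:ℕ):ℤ)+1) by omega),
          if_neg (by omega), if_pos (show -(m:ℤ) ≤ 2*s ∧ 2*s ≤ -((1:ℕ):ℤ) by omega),
          if_neg (by omega), if_pos (show -(m:ℤ) ≤ 2*s ∧ 2*s ≤ -(((2:ℕ):ℤ)+1) by omega),
          if_neg (by omega), if_pos (show -(m:ℤ) ≤ 2*s ∧ 2*s ≤ -((2:ℕ):ℤ) by omega)]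
      push_cast
      rw [show (-(2*(s:ℚ)) - 1)/2 = ((-s:ℤ):ℚ) - 1/2 by push_cast; ring,
          show (-(2*(s:ℚ)) - 1 + 1)/2 = ((-s:ℤ):ℚ) by push_cast; ring,
          show (-(2*(s:ℚ)) - 2)/2 = ((-s-1:ℤ):ℚ) by push_cast; ring,
          show (-(2*(s:ℚ)) - 2 + 1)/2 = ((-s:ℤ):ℚ) - 1/2 by push_cast; ring,
          ceil_intQ, ceil_intQ, ceil_sub_half]
      rw [show -s+1-1 = -s by ring, show -s-1+2-1 = -s by ring, show -s-1+1 = -s by ring,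
          show -s-1+2 = -s+1 by ring, show -s+2-1 = -s+1 by ring]
      rw [Ppos_single, Ppos_single, Ppos_pair, B_one (by omega : (0:ℤ) ≤ -s)]
      have hC : (MvPolynomial.C (B (-s) 2) : Rpoly) + MvPolynomial.C (B (-s+1) 2)
          = MvPolynomial.C ((s:ℚ)) * MvPolynomial.C ((s:ℚ)) := by
        rw [← map_add, ← map_mul, show B (-s) 2 + B (-s+1) 2 = (s:ℚ) * (s:ℚ) by
          rw [B_two (by omega), B_two (by omega)]; push_cast; ring]
      push_cast
      simp only [map_neg, map_add, map_one]
      linear_combination (-((va + (-(MvPolynomial.C (s:ℚ))) * vd)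
        * (va + (1 - MvPolynomial.C (s:ℚ)) * vd))) * hC
  · -- t = 2s+1
    rcases (by omega : 1 ≤ s ∨ s = 0 ∨ s = -1 ∨ s ≤ -2) with hs | rfl | rfl | hs
    · simp only [xiP, xiM]
      rw [if_pos (show ((1:ℕ):ℤ) ≤ 2*s+1 ∧ 2*s+1 ≤ (m:ℤ) by omega),
          if_pos (show ((1:ℕ):ℤ) + 1 ≤ 2*s+1 ∧ 2*s+1 ≤ (m:ℤ) by omega),
          if_pos (show ((2:ℕ):ℤ) ≤ 2*s+1 ∧ 2*s+1 ≤ (m:ℤ) by omega),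
          if_pos (show ((2:ℕ):ℤ) + 1 ≤ 2*s+1 ∧ 2*s+1 ≤ (m:ℤ) by omega)]
      push_cast
      rw [show (2*(s:ℚ) + 1 - 1 + 1)/2 = ((s:ℤ):ℚ) + 1/2 by push_cast; ring,
          show (2*(s:ℚ) + 1 - 1)/2 = ((s:ℤ):ℚ) by push_cast; ring,
          show (2*(s:ℚ) + 1 - 2 + 1)/2 = ((s:ℤ):ℚ) by push_cast; ring,
          show (2*(s:ℚ) + 1 - 2)/2 = ((s:ℤ):ℚ) - 1/2 by push_cast; ring,
          ceil_intQ, ceil_add_half, ceil_sub_half]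
      rw [show s+1+1-1 = s+1 by ring, show s+1-1 = s by ring, show s+1+1-2 = s by ring,
          show s+2-1 = s+1 by ring, show s+2-2 = s by ring]
      rw [Pneg_single, Pneg_pair, Pneg_pair', B_one (by omega : (0:ℤ) ≤ s+1),
          B_one (by omega : (0:ℤ) ≤ s)]
      have hC : (MvPolynomial.C (B (s+1) 2) : Rpoly) + MvPolynomial.C (B (s+1) 2)
          = MvPolynomial.C ((s:ℚ)) * MvPolynomial.C ((s:ℚ)) + MvPolynomial.C ((s:ℚ)) := by
        rw [← map_add, ← map_mul, ← map_add, show B (s+1) 2 + B (s+1) 2 = (s:ℚ)*(s:ℚ) + (s:ℚ) by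
          rw [B_two (by omega)]; push_cast; ring]
      push_cast
      simp only [map_sub, map_add, map_one]
      linear_combination (-((-va + MvPolynomial.C (s:ℚ) * vd)
        * (-va + MvPolynomial.C (s:ℚ) * vd))) * hC
    · -- t = 1
      simp only [xiP, xiM]
      rw [if_neg (show ¬(((1:ℕ):ℤ) + 1 ≤ 2*0+1 ∧ 2*0+1 ≤ (m:ℤ)) by omega),
          if_neg (show ¬(-(m:ℤ) ≤ 2*0+1 ∧ 2*0+1 ≤ -((1:ℕ):ℤ)) by omega),
          if_neg (show ¬(((2:ℕ):ℤ) ≤ 2*0+1 ∧ 2*0+1 ≤ (m:ℤ)) by omega),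
          if_neg (show ¬(-(m:ℤ) ≤ 2*0+1 ∧ 2*0+1 ≤ -(((2:ℕ):ℤ)+1)) by omega),
          if_neg (show ¬(((2:ℕ):ℤ) + 1 ≤ 2*0+1 ∧ 2*0+1 ≤ (m:ℤ)) by omega),
          if_neg (show ¬(-(m:ℤ) ≤ 2*0+1 ∧ 2*0+1 ≤ -((2:ℕ):ℤ)) by omega)]
      ring
    · -- t = -1
      simp only [xiP, xiM]
      rw [if_neg (show ¬(((1:ℕ):ℤ) ≤ 2*(-1)+1 ∧ 2*(-1)+1 ≤ (m:ℤ)) by omega),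
          if_neg (show ¬(-(m:ℤ) ≤ 2*(-1)+1 ∧ 2*(-1)+1 ≤ -(((1:ℕ):ℤ)+1)) by omega),
          if_neg (show ¬(((2:ℕ):ℤ) ≤ 2*(-1)+1 ∧ 2*(-1)+1 ≤ (m:ℤ)) by omega),
          if_neg (show ¬(-(m:ℤ) ≤ 2*(-1)+1 ∧ 2*(-1)+1 ≤ -(((2:ℕ):ℤ)+1)) by omega),
          if_neg (show ¬(((2:ℕ):ℤ) + 1 ≤ 2*(-1)+1 ∧ 2*(-1)+1 ≤ (m:ℤ)) by omega),
          if_neg (show ¬(-(m:ℤ) ≤ 2*(-1)+1 ∧ 2*(-1)+1 ≤ -((2:ℕ):ℤ)) by omega)]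
      ring
    · -- t = 2s+1, s ≤ -2
      simp only [xiP, xiM]
      rw [if_neg (by omega), if_pos (show -(m:ℤ) ≤ 2*s+1 ∧ 2*s+1 ≤ -(((1:ℕ):ℤ)+1) by omega),
          if_neg (by omega), if_pos (show -(m:ℤ) ≤ 2*s+1 ∧ 2*s+1 ≤ -((1:ℕ):ℤ) by omega),
          if_neg (by omega), if_pos (show -(m:ℤ) ≤ 2*s+1 ∧ 2*s+1 ≤ -(((2:ℕ):ℤ)+1) by omega),
          if_neg (by omega), if_pos (show -(m:ℤ) ≤ 2*s+1 ∧ 2*s+1 ≤ -((2:ℕ):ℤ) by omega)]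
      push_cast
      rw [show (-(2*(s:ℚ) + 1) - 1)/2 = ((-s-1:ℤ):ℚ) by push_cast; ring,
          show (-(2*(s:ℚ) + 1) - 1 + 1)/2 = ((-s:ℤ):ℚ) - 1/2 by push_cast; ring,
          show (-(2*(s:ℚ) + 1) - 2)/2 = ((-s-1:ℤ):ℚ) - 1/2 by push_cast; ring,
          show (-(2*(s:ℚ) + 1) - 2 + 1)/2 = ((-s-1:ℤ):ℚ) by push_cast; ring,
          ceil_intQ, ceil_sub_half, ceil_sub_half]
      rw [show -s-1+1-1 = -s-1 by ring, show -s-1+2-1 = -s by ring, show -s-1+1 = -s by ring,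
          show -s+1-1 = -s by ring, show -s-1+2 = -s+1 by ring]
      rw [Ppos_single, Ppos_pair, Ppos_pair₂, B_one (by omega : (0:ℤ) ≤ -s-1),
          B_one (by omega : (0:ℤ) ≤ -s)]
      have hC : (MvPolynomial.C (B (-s) 2) : Rpoly) + MvPolynomial.C (B (-s) 2)
          = MvPolynomial.C ((s:ℚ)) * MvPolynomial.C ((s:ℚ)) + MvPolynomial.C ((s:ℚ)) := by
        rw [← map_add, ← map_mul, ← map_add, show B (-s) 2 + B (-s) 2 = (s:ℚ)*(s:ℚ) + (s:ℚ) by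
          rw [B_two (by omega)]; push_cast; ring]
      push_cast
      simp only [map_sub, map_add, map_one, map_neg]
      linear_combination (-((va + (-(MvPolynomial.C (s:ℚ))) * vd)
        * (va + (-(MvPolynomial.C (s:ℚ))) * vd))) * hC
end
end

section
/- For every integer q with 0 ≤ q ≤ m and every t ∈ V_m, the following four identities hold in R: ξ⁺_m(t)·(ξ⁺_q(t) − ξ⁺_q(m)) = 0, ξ⁺_m(t)·(ξ⁻_q(t) − ξ⁻_q(m)) = 0, ξ⁻_m(t)·(ξ⁺_q(t) − ξ⁺_q(−m)) = 0, and ξ⁻_m(t)·(ξ⁻_q(t) − ξ⁻_q(−m)) = 0. (Here ξ⁺_m and ξ⁻_m are the classes ξ(2m,0) and ξ(0,2m) of the paper, and the constants subtracted are their values at the extreme vertices m and −m.) -/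
noncomputable section

open Finset MvPolynomial

lemma xiP_top_zero (m : ℕ) (hm : 1 ≤ m) (t : ℤ) (ht1 : -(m : ℤ) ≤ t) (h : t ≠ m) :
    xiP m m t = 0 := by
  unfold xiP
  rw [if_neg (by omega), if_neg (by omega)]

lemma xiM_top_zero (m : ℕ) (hm : 1 ≤ m) (t : ℤ) (ht2 : t ≤ (m : ℤ)) (h : t ≠ -(m : ℤ)) :
    xiM m m t = 0 := by
  unfold xiM
  rw [if_neg (by omega), if_neg (by omega)]

/-- the top classes `ξ⁺_m = ξ(2m,0)` and `ξ⁻_m = ξ(0,2m)` kill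
`ξ_q − (value at the extreme vertex)` for every `0 ≤ q ≤ m`. -/
theorem statement2 (m : ℕ) (hm : 1 ≤ m) (q : ℕ) (hq : q ≤ m)
    (t : ℤ) (ht1 : -(m : ℤ) ≤ t) (ht2 : t ≤ (m : ℤ)) :
    xiP m m t * (xiP m q t - xiP m q (m : ℤ)) = 0 ∧
    xiP m m t * (xiM m q t - xiM m q (m : ℤ)) = 0 ∧
    xiM m m t * (xiP m q t - xiP m q (-(m : ℤ))) = 0 ∧
    xiM m m t * (xiM m q t - xiM m q (-(m : ℤ))) = 0 := by
  refine ⟨?_, ?_, ?_, ?_⟩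
  · by_cases h : t = (m : ℤ)
    · rw [h, sub_self, mul_zero]
    · rw [xiP_top_zero m hm t ht1 h, zero_mul]
  · by_cases h : t = (m : ℤ)
    · rw [h, sub_self, mul_zero]
    · rw [xiP_top_zero m hm t ht1 h, zero_mul]
  · by_cases h : t = -(m : ℤ)
    · rw [h, sub_self, mul_zero]
    · rw [xiM_top_zero m hm t ht2 h, zero_mul]
  · by_cases h : t = -(m : ℤ)
    · rw [h, sub_self, mul_zero]
    · rw [xiM_top_zero m hm t ht2 h, zero_mul]
end
end

section
/- Let q be an odd integer with 0 < q < m. Then for every t ∈ V_m, ξ⁺_q(t)·(ξ⁺_1(t) − ξ⁺_1(q)) = (q+1)·ξ⁻_{q+1}(t) in R, where ξ⁺_1(q) ∈ R is the value of ξ⁺_1 at the vertex q. -/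
noncomputable section

open Finset MvPolynomial

/-- Auxiliary: split off the top factor of `P⁻(a,b)`. -/
lemma Pneg_split (a b : ℤ) (h : a ≤ b) :
    Pneg a b = Pneg a (b-1) * (-va + MvPolynomial.C (b:ℚ) * vd) := by
  have e : Finset.Icc a b = insert b (Finset.Icc a (b-1)) := by
    ext x; simp only [Finset.mem_Icc, Finset.mem_insert]; omega
  rw [Pneg, e, Finset.prod_insert (by simp only [Finset.mem_Icc]; omega), Pneg, mul_comm]

/-- Auxiliary: split off the bottom factor of `P⁺(a,b)`. -/
lemma Ppos_split (a b : ℤ) (h : a ≤ b) :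
    Ppos a b = (va + MvPolynomial.C (a:ℚ) * vd) * Ppos (a+1) b := by
  have e : Finset.Icc a b = insert a (Finset.Icc (a+1) b) := by
    ext x; simp only [Finset.mem_Icc, Finset.mem_insert]; omega
  rw [Ppos, e, Finset.prod_insert (by simp only [Finset.mem_Icc]; omega), Ppos]

/-- Auxiliary: `B` at a nonnegative argument. -/
lemma B_nat (x : ℤ) (n q : ℕ) (h : x = (n:ℤ)) : B x q = (n.choose q : ℚ) := by
  subst h; simp [B]

lemma Pneg_eq {a b a' b' : ℤ} (h1 : a = a') (h2 : b = b') : Pneg a b = Pneg a' b' := by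
  rw [h1, h2]

lemma Ppos_eq {a b a' b' : ℤ} (h1 : a = a') (h2 : b = b') : Ppos a b = Ppos a' b' := by
  rw [h1, h2]

/-- Auxiliary: value of `ξ⁺_1` at a positive vertex. -/
lemma xiP_one (m s u : ℤ) (h1 : 1 ≤ s) (h2 : s ≤ m)
    (hu : ⌈((s:ℚ) - ((1:ℕ):ℚ) + 1)/2⌉ = u) (hu1 : 1 ≤ u) :
    xiP m 1 s = MvPolynomial.C ((u:ℚ)) * (-va + MvPolynomial.C ((u:ℚ)-1) * vd) := by
  rw [xiP, if_pos (show ((1:ℕ):ℤ) ≤ s ∧ s ≤ m from ⟨by exact_mod_cast h1, h2⟩), hu]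
  have e0 : u + ((1:ℕ):ℤ) - 1 = u := by push_cast; ring
  have e1 : B (u + ((1:ℕ):ℤ) - 1) 1 = (u:ℚ) := by
    rw [e0, B, Nat.choose_one_right]
    exact_mod_cast congrArg (Int.cast : ℤ → ℚ) (Int.toNat_of_nonneg (by omega))
  have e2 : u + ((1:ℕ):ℤ) - 2 = u - 1 := by push_cast; ring
  rw [e1, e2, Pneg_single]
  push_cast
  ring

/-- Auxiliary: value of `ξ⁺_1` at a negative vertex. -/
lemma xiP_one_neg (m s f : ℤ) (h1 : -m ≤ s) (h2 : s ≤ -2)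
    (hf : ⌈(-(s:ℚ) - ((1:ℕ):ℚ))/2⌉ = f) (hf1 : 1 ≤ f) :
    xiP m 1 s = MvPolynomial.C ((f:ℚ)) * (va + MvPolynomial.C ((f:ℚ)+1) * vd) := by
  rw [xiP, if_neg (by omega), if_pos (show -m ≤ s ∧ s ≤ -(((1:ℕ):ℤ)+1) from ⟨h1, by omega⟩), hf]
  have e0 : f + ((1:ℕ):ℤ) - 1 = f := by push_cast; ring
  have e1 : B (f + ((1:ℕ):ℤ) - 1) 1 = (f:ℚ) := by
    rw [e0, B, Nat.choose_one_right]
    exact_mod_cast congrArg (Int.cast : ℤ → ℚ) (Int.toNat_of_nonneg (by omega))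
  have e2 : f + ((1:ℕ):ℤ) = f + 1 := by push_cast; ring
  rw [e1, e2, Ppos_single]
  push_cast
  ring

/-- for odd `0 < q < m`,
`ξ⁺_q · (ξ⁺_1 − ξ⁺_1(q)) = (q+1) · ξ⁻_{q+1}` pointwise on `V_m`. -/
theorem statement3 (m : ℕ) (hm : 1 ≤ m) (q : ℕ) (hodd : Odd q)
    (hq0 : 0 < q) (hqm : q < m)
    (t : ℤ) (ht1 : -(m : ℤ) ≤ t) (ht2 : t ≤ (m : ℤ)) :
    xiP m q t * (xiP m 1 t - xiP m 1 (q : ℤ)) = ((q + 1 : ℕ) : Rpoly) * xiM m (q + 1) t := by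
  obtain ⟨j, hj⟩ := hodd
  subst hj
  have hvq : ⌈(((((2*j+1:ℕ)):ℤ):ℚ) - ((1:ℕ):ℚ) + 1)/2⌉ = (j:ℤ)+1 := by
    rw [show (((((2*j+1:ℕ)):ℤ):ℚ) - ((1:ℕ):ℚ) + 1)/2 = 1/2 + ((j:ℤ):ℚ) by push_cast; ring,
      Int.ceil_add_intCast]
    have : ⌈(1/2:ℚ)⌉ = 1 := by norm_num [Int.ceil_eq_iff]
    omega
  by_cases hA : ((2*j+1:ℕ):ℤ) ≤ t
  · by_cases hA2 : ((2*j+1:ℕ):ℤ) + 2 ≤ t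
    · -- main positive region
      have hcpos : 0 < ⌈((t : ℚ) - ((2*j+1:ℕ) : ℚ) + 1) / 2⌉ := by
        apply Int.ceil_pos.mpr
        have h : ((2*j+1:ℕ):ℚ) ≤ (t:ℚ) := by exact_mod_cast hA
        apply div_pos <;> [linarith; norm_num]
      obtain ⟨n, hn⟩ : ∃ n : ℕ, (n:ℤ) = ⌈((t : ℚ) - ((2*j+1:ℕ) : ℚ) + 1) / 2⌉ - 1 :=
        ⟨(⌈((t : ℚ) - ((2*j+1:ℕ) : ℚ) + 1) / 2⌉ - 1).toNat, Int.toNat_of_nonneg (by omega)⟩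
      have hc : ⌈((t : ℚ) - ((2*j+1:ℕ) : ℚ) + 1) / 2⌉ = (n:ℤ) + 1 := by omega
      have hu : ⌈((t:ℚ) - ((1:ℕ):ℚ) + 1)/2⌉ = (n:ℤ) + 1 + j := by
        have h2 : ⌈((t : ℚ) - ((2*j+1:ℕ) : ℚ) + 1) / 2⌉
            = ⌈((t:ℚ) - ((1:ℕ):ℚ) + 1)/2⌉ - (j:ℤ) := by
          rw [show ((t : ℚ) - ((2*j+1:ℕ) : ℚ) + 1) / 2
              = ((t:ℚ) - ((1:ℕ):ℚ) + 1)/2 - ((j:ℤ):ℚ) by push_cast; ring, Int.ceil_sub_intCast]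
        omega
      have hd : ⌈((t:ℚ) - ((2*j+1+1:ℕ):ℚ))/2⌉ = (n:ℤ) := by
        rw [show ((t:ℚ) - ((2*j+1+1:ℕ):ℚ))/2
            = ((t : ℚ) - ((2*j+1:ℕ) : ℚ) + 1) / 2 - ((1:ℤ):ℚ) by push_cast; ring,
          Int.ceil_sub_intCast]
        omega
      rw [xiP, if_pos (show ((2*j+1:ℕ):ℤ) ≤ t ∧ t ≤ (m:ℤ) from ⟨hA, ht2⟩), hc]
      rw [xiP_one m t ((n:ℤ)+1+j) (by omega) ht2 hu (by omega)]
      rw [xiP_one m ((2*j+1:ℕ):ℤ) ((j:ℤ)+1) (by omega) (by omega) hvq (by omega)]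
      rw [xiM, if_pos (show ((2*j+1+1:ℕ):ℤ)+1 ≤ t ∧ t ≤ (m:ℤ) from
        ⟨by push_cast; push_cast at hA2; omega, ht2⟩), hd]
      have eB1 : B ((n:ℤ)+1+(2*j+1:ℕ)-1) (2*j+1) = ((n+(2*j+1)).choose (2*j+1) : ℚ) :=
        B_nat _ _ _ (by push_cast; ring)
      have eB2 : B ((n:ℤ)+((2*j+1+1:ℕ):ℤ)-1) (2*j+1+1) = ((n+(2*j+1)).choose (2*j+1+1) : ℚ) :=
        B_nat _ _ _ (by push_cast; ring)
      have eP1 : Pneg ((n:ℤ)+1-1) ((n:ℤ)+1+(2*j+1:ℕ)-2) = Pneg (n:ℤ) ((n:ℤ)+(2*j+1:ℕ)-1) :=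
        Pneg_eq (by ring) (by push_cast; ring)
      have eP2 : Pneg (n:ℤ) ((n:ℤ)+((2*j+1+1:ℕ):ℤ)-1) = Pneg (n:ℤ) ((n:ℤ)+(2*j+1:ℕ)) :=
        Pneg_eq rfl (by push_cast; ring)
      rw [eB1, eB2, eP1, eP2, Pneg_split (n:ℤ) ((n:ℤ)+(2*j+1:ℕ)) (by omega)]
      have hsR : ((n:ℕ) : Rpoly) * (((n+(2*j+1)).choose (2*j+1) : ℕ) : Rpoly)
          = ((2*j+1+1 : ℕ) : Rpoly) * (((n+(2*j+1)).choose (2*j+1+1) : ℕ) : Rpoly) := by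
        have h := Nat.choose_succ_right_eq (n+(2*j+1)) (2*j+1)
        rw [Nat.add_sub_cancel] at h
        have h2 : n * (n+(2*j+1)).choose (2*j+1)
            = (2*j+1+1) * ((n+(2*j+1)).choose (2*j+1+1)) := by
          rw [Nat.mul_comm, Nat.mul_comm (2*j+1+1)]; exact h.symm
        exact_mod_cast h2
      set P : Rpoly := Pneg (n:ℤ) ((n:ℤ)+(2*j+1:ℕ)-1) with hP
      push_cast
      simp only [map_add, map_sub, map_mul, map_one, map_natCast, map_ofNat]
      push_cast at hsR
      linear_combination (P * (-va + (((n:ℕ):Rpoly) + (2*((j:ℕ):Rpoly)+1)) * vd)) * hsR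
    · -- degenerate: t = q or t = q+1
      have hut : ⌈((t:ℚ) - ((1:ℕ):ℚ) + 1)/2⌉ = (j:ℤ)+1 := by
        rcases (show t = ((2*j+1:ℕ):ℤ) ∨ t = ((2*j+1:ℕ):ℤ)+1 from by omega) with h | h
        · rw [h]; exact hvq
        · rw [h, show (((((2*j+1:ℕ):ℤ)+1:ℤ):ℚ) - ((1:ℕ):ℚ) + 1)/2 = (((j:ℤ)+1 : ℤ):ℚ) by
            push_cast; ring, Int.ceil_intCast]
      have h1 : xiP m 1 t = xiP m 1 ((2*j+1:ℕ):ℤ) := by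
        rw [xiP_one m t ((j:ℤ)+1) (by omega) ht2 hut (by omega),
          xiP_one m ((2*j+1:ℕ):ℤ) ((j:ℤ)+1) (by omega) (by omega) hvq (by omega)]
      have h2 : xiM m (2*j+1+1) t = 0 := by
        rw [xiM, if_neg (by omega), if_neg (by omega)]
      rw [h1, sub_self, mul_zero, h2, mul_zero]
  · by_cases hB : t ≤ -(((2*j+1:ℕ):ℤ)+1)
    · -- main negative region
      have hepos : 0 < ⌈(-(t : ℚ) - ((2*j+1:ℕ) : ℚ)) / 2⌉ := by
        apply Int.ceil_pos.mpr
        have h : (t:ℚ) ≤ -((2*j+1:ℕ):ℚ) - 1 := by exact_mod_cast hB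
        apply div_pos <;> [linarith; norm_num]
      obtain ⟨n, hn⟩ : ∃ n : ℕ, (n:ℤ) = ⌈(-(t : ℚ) - ((2*j+1:ℕ) : ℚ)) / 2⌉ - 1 :=
        ⟨(⌈(-(t : ℚ) - ((2*j+1:ℕ) : ℚ)) / 2⌉ - 1).toNat, Int.toNat_of_nonneg (by omega)⟩
      have he : ⌈(-(t : ℚ) - ((2*j+1:ℕ) : ℚ)) / 2⌉ = (n:ℤ) + 1 := by omega
      have hf : ⌈(-(t:ℚ) - ((1:ℕ):ℚ))/2⌉ = (n:ℤ) + 1 + j := by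
        have h2 : ⌈(-(t : ℚ) - ((2*j+1:ℕ) : ℚ)) / 2⌉
            = ⌈(-(t:ℚ) - ((1:ℕ):ℚ))/2⌉ - (j:ℤ) := by
          rw [show (-(t : ℚ) - ((2*j+1:ℕ) : ℚ)) / 2
              = (-(t:ℚ) - ((1:ℕ):ℚ))/2 - ((j:ℤ):ℚ) by push_cast; ring, Int.ceil_sub_intCast]
        omega
      have hg : ⌈(-(t:ℚ) - ((2*j+1+1:ℕ):ℚ) + 1)/2⌉ = (n:ℤ) + 1 := by
        rw [show (-(t:ℚ) - ((2*j+1+1:ℕ):ℚ) + 1)/2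
            = (-(t : ℚ) - ((2*j+1:ℕ) : ℚ)) / 2 by push_cast; ring]
        omega
      rw [xiP, if_neg (by omega),
        if_pos (show -(m:ℤ) ≤ t ∧ t ≤ -(((2*j+1:ℕ):ℤ)+1) from ⟨ht1, hB⟩), he]
      rw [xiP_one_neg m t ((n:ℤ)+1+j) ht1 (by omega) hf (by omega)]
      rw [xiP_one m ((2*j+1:ℕ):ℤ) ((j:ℤ)+1) (by omega) (by omega) hvq (by omega)]
      rw [xiM, if_neg (by omega),
        if_pos (show -(m:ℤ) ≤ t ∧ t ≤ -((2*j+1+1:ℕ):ℤ) from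
          ⟨ht1, by push_cast; push_cast at hB; omega⟩), hg]
      have eB1 : B ((n:ℤ)+1+(2*j+1:ℕ)-1) (2*j+1) = ((n+(2*j+1)).choose (2*j+1) : ℚ) :=
        B_nat _ _ _ (by push_cast; ring)
      have eB2 : B ((n:ℤ)+1+((2*j+1+1:ℕ):ℤ)-1) (2*j+1+1) = ((n+(2*j+1)+1).choose (2*j+1+1) : ℚ) :=
        B_nat _ _ _ (by push_cast; ring)
      have eP2 : Ppos ((n:ℤ)+1) ((n:ℤ)+1+((2*j+1+1:ℕ):ℤ)-1) = Ppos ((n:ℤ)+1) ((n:ℤ)+1+(2*j+1:ℕ)) :=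
        Ppos_eq rfl (by push_cast; ring)
      rw [eB1, eB2, eP2, Ppos_split ((n:ℤ)+1) ((n:ℤ)+1+(2*j+1:ℕ)) (by omega)]
      have hsR : ((n+(2*j+1)+1 : ℕ) : Rpoly) * (((n+(2*j+1)).choose (2*j+1) : ℕ) : Rpoly)
          = ((2*j+1+1 : ℕ) : Rpoly) * (((n+(2*j+1)+1).choose (2*j+1+1) : ℕ) : Rpoly) := by
        have h := Nat.add_one_mul_choose_eq (n+(2*j+1)) (2*j+1)
        have h2 : (n+(2*j+1)+1) * (n+(2*j+1)).choose (2*j+1)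
            = (2*j+1+1) * ((n+(2*j+1)+1).choose (2*j+1+1)) := by
          rw [Nat.mul_comm (2*j+1+1)]
          simpa [Nat.succ_eq_add_one] using h
        exact_mod_cast h2
      set P : Rpoly := Ppos ((n:ℤ)+1+1) ((n:ℤ)+1+(2*j+1:ℕ)) with hP
      push_cast
      simp only [map_add, map_sub, map_mul, map_one, map_natCast, map_ofNat]
      push_cast at hsR
      linear_combination (P * (va + (((n:ℕ):Rpoly) + 1) * vd)) * hsR
    · -- middle region: everything vanishes
      have h1 : xiP m (2*j+1) t = 0 := by
        rw [xiP, if_neg (by omega), if_neg (by omega)]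
      have h2 : xiM m (2*j+1+1) t = 0 := by
        rw [xiM, if_neg (by push_cast; omega), if_neg (by push_cast; omega)]
      rw [h1, h2, zero_mul, mul_zero]
end
end

section
/- Let q be an even integer with 0 < q < m. Then for every t ∈ V_m, ξ⁺_q(t)·(ξ⁺_1(t) − ξ⁺_1(q)) = ξ⁺_{q+1}(t) + q·ξ⁻_{q+1}(t) in R, where ξ⁺_1(q) ∈ R is the value of ξ⁺_1 at the vertex q. -/
set_option maxHeartbeats 1000000


noncomputable section

open Finset MvPolynomial

-- ### helper lemmas

lemma Icc_succ_left' (a b : ℤ) : Icc (a+1) b = Ioc a b := by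
  ext x; simp [Int.add_one_le_iff]

lemma Icc_pred_right' (a b : ℤ) : Icc a b = Ico a (b+1) := by
  ext x; simp [Int.lt_add_one_iff]

lemma Pneg_bot {a b : ℤ} (h : a ≤ b) :
    Pneg a b = (-va + MvPolynomial.C (a:ℚ) * vd) * Pneg (a+1) b := by
  rw [Pneg, Pneg, Icc_succ_left']; exact (Finset.mul_prod_Ioc_eq_prod_Icc h).symm
lemma Pneg_top {a b : ℤ} (h : a ≤ b+1) :
    Pneg a (b+1) = Pneg a b * (-va + MvPolynomial.C ((b+1:ℤ):ℚ) * vd) := by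
  rw [Pneg, Pneg, Icc_pred_right' a b, Finset.prod_Ico_mul_eq_prod_Icc h]
lemma Ppos_bot {a b : ℤ} (h : a ≤ b) :
    Ppos a b = (va + MvPolynomial.C (a:ℚ) * vd) * Ppos (a+1) b := by
  rw [Ppos, Ppos, Icc_succ_left']; exact (Finset.mul_prod_Ioc_eq_prod_Icc h).symm
lemma Ppos_top {a b : ℤ} (h : a ≤ b+1) :
    Ppos a (b+1) = Ppos a b * (va + MvPolynomial.C ((b+1:ℤ):ℚ) * vd) := by
  rw [Ppos, Ppos, Icc_pred_right' a b, Finset.prod_Ico_mul_eq_prod_Icc h]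
lemma B_eq (z : ℤ) (k q : ℕ) (h : z.toNat = k) : B z q = (k.choose q : ℚ) := by
  rw [B, h]

-- ### evaluation lemmas
lemma xiP_pos_eval (m : ℤ) (q : ℕ) (t c a b : ℤ) (β : ℚ)
    (h1 : (q:ℤ) ≤ t) (h2 : t ≤ m) (hc : ⌈((t : ℚ) - (q : ℚ) + 1) / 2⌉ = c)
    (ha : a = c - 1) (hb : b = c + q - 2) (hB : B (c + q - 1) q = β) :
    xiP m q t = MvPolynomial.C β * Pneg a b := by
  subst ha hb hB; rw [xiP, if_pos ⟨h1, h2⟩, hc]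

lemma xiP_neg_eval (m : ℤ) (q : ℕ) (t c a b : ℤ) (β : ℚ)
    (h1 : -m ≤ t) (h2 : t ≤ -((q:ℤ)+1)) (hc : ⌈(-(t : ℚ) - (q : ℚ)) / 2⌉ = c)
    (ha : a = c + 1) (hb : b = c + q) (hB : B (c + q - 1) q = β) :
    xiP m q t = MvPolynomial.C β * Ppos a b := by
  subst ha hb hB; rw [xiP, if_neg (by omega), if_pos ⟨h1, h2⟩, hc]

lemma xiP_zero (m : ℤ) (q : ℕ) (t : ℤ) (h1 : ¬((q:ℤ) ≤ t ∧ t ≤ m))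
    (h2 : ¬(-m ≤ t ∧ t ≤ -((q:ℤ)+1))) : xiP m q t = 0 := by
  rw [xiP, if_neg h1, if_neg h2]

lemma xiM_pos_eval (m : ℤ) (q : ℕ) (t c a b : ℤ) (β : ℚ)
    (h1 : (q:ℤ)+1 ≤ t) (h2 : t ≤ m) (hc : ⌈((t : ℚ) - (q : ℚ)) / 2⌉ = c)
    (ha : a = c) (hb : b = c + q - 1) (hB : B (c + q - 1) q = β) :
    xiM m q t = MvPolynomial.C β * Pneg a b := by
  subst ha hb hB; rw [xiM, if_pos ⟨h1, h2⟩, hc]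

lemma xiM_neg_eval (m : ℤ) (q : ℕ) (t c a b : ℤ) (β : ℚ)
    (h1 : -m ≤ t) (h2 : t ≤ -(q:ℤ)) (hq : 0 < q)
    (hc : ⌈(-(t : ℚ) - (q : ℚ) + 1) / 2⌉ = c)
    (ha : a = c) (hb : b = c + q - 1) (hB : B (c + q - 1) q = β) :
    xiM m q t = MvPolynomial.C β * Ppos a b := by
  subst ha hb hB; rw [xiM, if_neg (by omega), if_pos ⟨h1, h2⟩, hc]

lemma xiM_zero (m : ℤ) (q : ℕ) (t : ℤ) (h1 : ¬((q:ℤ)+1 ≤ t ∧ t ≤ m))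
    (h2 : ¬(-m ≤ t ∧ t ≤ -(q:ℤ))) : xiM m q t = 0 := by
  rw [xiM, if_neg h1, if_neg h2]

-- ### binomial identities
lemma natI1 (n q : ℕ) :
    (n+1) * (n+q).choose q = (n+q+1).choose (q+1) + q * ((n+q).choose (q+1)) := by
  have h1 : (n+q).choose (q+1) * (q+1) = (n+q).choose q * n := by
    rw [Nat.choose_succ_right_eq]; congr 1; omega
  have h2 : (n+q+1).choose (q+1) = (n+q).choose q + (n+q).choose (q+1) :=
    Nat.choose_succ_succ _ _
  calc (n+1) * (n+q).choose q = (n+q).choose q + (n+q).choose q * n := by ring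
    _ = (n+q).choose q + (n+q).choose (q+1) * (q+1) := by rw [h1]
    _ = _ := by rw [h2]; ring

lemma natI2 (n q : ℕ) :
    (n+1) * (n+q+1).choose q = (q+1) * ((n+q+1).choose (q+1)) := by
  have h1 : (n+q+1).choose (q+1) * (q+1) = (n+q+1).choose q * (n+1) := by
    rw [Nat.choose_succ_right_eq]; congr 1; omega
  linarith

lemma natI2' (n q : ℕ) :
    (n+q+1) * (n+q).choose q = (q+1) * ((n+q+1).choose (q+1)) := by
  have := Nat.add_one_mul_choose_eq (n+q) q
  linarith

lemma natI3 (n q : ℕ) :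
    (q+n+1) * (n+q+1).choose q = (n+q+1).choose (q+1) + q * ((n+q+2).choose (q+1)) := by
  have h1 : (n+q+1).choose (q+1) * (q+1) = (n+q+1).choose q * (n+1) := by
    rw [Nat.choose_succ_right_eq]; congr 1; omega
  have h2 : (n+q+2).choose (q+1) = (n+q+1).choose q + (n+q+1).choose (q+1) :=
    Nat.choose_succ_succ _ _
  calc (q+n+1) * (n+q+1).choose q
      = (n+q+1).choose q * (n+1) + q * (n+q+1).choose q := by ring
    _ = (n+q+1).choose (q+1) * (q+1) + q * (n+q+1).choose q := by rw [h1]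
    _ = (n+q+1).choose (q+1) + q * ((n+q+1).choose q + (n+q+1).choose (q+1)) := by ring
    _ = _ := by rw [h2]


/-- for even `0 < q < m`,
`ξ⁺_q · (ξ⁺_1 − ξ⁺_1(q)) = ξ⁺_{q+1} + q·ξ⁻_{q+1}` pointwise on `V_m`. -/
theorem statement8 (m : ℕ) (hm : 1 ≤ m) (q : ℕ) (heven : Even q)
    (hq0 : 0 < q) (hqm : q < m)
    (t : ℤ) (ht1 : -(m : ℤ) ≤ t) (ht2 : t ≤ (m : ℤ)) :
    xiP m q t * (xiP m 1 t - xiP m 1 (q : ℤ)) =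
      xiP m (q + 1) t + (q : Rpoly) * xiM m (q + 1) t := by
  obtain ⟨p, rfl⟩ := heven
  have hp : 1 ≤ p := by omega
  by_cases hA : ((p+p:ℕ):ℤ) + 1 ≤ t
  · -- region A : q+1 ≤ t ≤ m
    obtain ⟨u, hu⟩ : ∃ u : ℕ, t = ((p+p:ℕ):ℤ) + 1 + (u:ℤ) :=
      ⟨(t - (p+p) - 1).toNat, by omega⟩
    rcases Nat.even_or_odd u with ⟨n, hn⟩ | ⟨n, hn⟩ <;> subst hn <;> subst hu
    · -- A1: t = q + 2n + 1
      have hceil : ∀ t' : ℤ, t' = ((p+p:ℕ):ℤ) + 1 + ((n+n:ℕ):ℤ) → True := fun _ _ => trivial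
      rcases Nat.eq_zero_or_pos n with rfl | hn1
      · rw [xiP_pos_eval m (p+p) _ 1 0 ((p:ℤ)+p-1) 1
              (by omega) (by omega)
              (by rw [Int.ceil_eq_iff]; push_cast; constructor <;> linarith)
              (by omega) (by omega)
              (by rw [B_eq _ (p+p) _ (by omega)]; simp),
            xiP_pos_eval m 1 _ ((p:ℤ)+1) (p:ℤ) (p:ℤ) ((p:ℚ)+1)
              (by omega) (by omega)
              (by rw [Int.ceil_eq_iff]; push_cast; constructor <;> linarith)
              (by omega) (by omega)
              (by rw [B_eq _ (p+1) 1 (by omega), Nat.choose_one_right]; push_cast; ring),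
            xiP_pos_eval m 1 ((p+p:ℕ):ℤ) (p:ℤ) ((p:ℤ)-1) ((p:ℤ)-1) (p:ℚ)
              (by omega) (by omega)
              (by rw [Int.ceil_eq_iff]; push_cast; constructor <;> linarith)
              (by omega) (by omega)
              (by rw [B_eq _ p 1 (by omega), Nat.choose_one_right]),
            xiP_pos_eval m (p+p+1) _ 1 0 (((p:ℤ)+p-1)+1) 1
              (by omega) (by omega)
              (by rw [Int.ceil_eq_iff]; push_cast; constructor <;> linarith)
              (by omega) (by omega)
              (by rw [B_eq _ (p+p+1) _ (by omega)]; simp),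
            xiM_zero m (p+p+1) _ (by omega) (by omega),
            Pneg_top (show (0:ℤ) ≤ (p:ℤ)+p-1+1 by omega),
            Pneg_single (p:ℤ), Pneg_single ((p:ℤ)-1)]
        push_cast [map_add, map_sub, map_one, map_mul, map_natCast, map_intCast, map_ofNat]
        ring
      · rw [xiP_pos_eval m (p+p) _ ((n:ℤ)+1) (n:ℤ) ((n:ℤ)+p+p-1)
              ((n+(p+p)).choose (p+p) : ℚ)
              (by omega) (by omega)
              (by rw [Int.ceil_eq_iff]; push_cast; constructor <;> linarith)
              (by omega) (by omega) (B_eq _ (n+(p+p)) _ (by omega)),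
            xiP_pos_eval m 1 _ ((p:ℤ)+n+1) ((p:ℤ)+n) ((p:ℤ)+n) ((p:ℚ)+n+1)
              (by omega) (by omega)
              (by rw [Int.ceil_eq_iff]; push_cast; constructor <;> linarith)
              (by omega) (by omega)
              (by rw [B_eq _ (p+n+1) 1 (by omega), Nat.choose_one_right]; push_cast; ring),
            xiP_pos_eval m 1 ((p+p:ℕ):ℤ) (p:ℤ) ((p:ℤ)-1) ((p:ℤ)-1) (p:ℚ)
              (by omega) (by omega)
              (by rw [Int.ceil_eq_iff]; push_cast; constructor <;> linarith)
              (by omega) (by omega)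
              (by rw [B_eq _ p 1 (by omega), Nat.choose_one_right]),
            xiP_pos_eval m (p+p+1) _ ((n:ℤ)+1) (n:ℤ) (((n:ℤ)+p+p-1)+1)
              ((n+(p+p)+1).choose ((p+p)+1) : ℚ)
              (by omega) (by omega)
              (by rw [Int.ceil_eq_iff]; push_cast; constructor <;> linarith)
              (by omega) (by omega) (B_eq _ (n+(p+p)+1) _ (by omega)),
            xiM_pos_eval m (p+p+1) _ (n:ℤ) (n:ℤ) (((n:ℤ)+p+p-1)+1)
              ((n+(p+p)).choose ((p+p)+1) : ℚ)
              (by omega) (by omega)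
              (by rw [Int.ceil_eq_iff]; push_cast; constructor <;> linarith)
              (by omega) (by omega) (B_eq _ (n+(p+p)) _ (by omega)),
            Pneg_top (show (n:ℤ) ≤ (n:ℤ)+p+p-1+1 by omega),
            Pneg_single ((p:ℤ)+n), Pneg_single ((p:ℤ)-1)]
        have key : ((n:Rpoly)+1) * ((n+(p+p)).choose (p+p) : ℕ) =
            ((n+(p+p)+1).choose ((p+p)+1) : ℕ) +
              ((p:Rpoly)+p) * ((n+(p+p)).choose ((p+p)+1) : ℕ) := by
          exact_mod_cast congrArg (Nat.cast (R := Rpoly)) (natI1 n (p+p))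
        push_cast [map_add, map_sub, map_one, map_mul, map_natCast, map_intCast, map_ofNat]
        linear_combination (Pneg (n:ℤ) ((n:ℤ)+p+p-1) *
          (-va + ((n:Rpoly)+p+p) * vd)) * key
    · -- A2: t = q + 2n + 2
      rw [xiP_pos_eval m (p+p) _ ((n:ℤ)+2) ((n:ℤ)+1) ((n:ℤ)+p+p)
            ((n+(p+p)+1).choose (p+p) : ℚ)
            (by omega) (by omega)
            (by rw [Int.ceil_eq_iff]; push_cast; constructor <;> linarith)
            (by omega) (by omega) (B_eq _ (n+(p+p)+1) _ (by omega)),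
          xiP_pos_eval m 1 _ ((p:ℤ)+n+1) ((p:ℤ)+n) ((p:ℤ)+n) ((p:ℚ)+n+1)
            (by omega) (by omega)
            (by rw [Int.ceil_eq_iff]; push_cast; constructor <;> linarith)
            (by omega) (by omega)
            (by rw [B_eq _ (p+n+1) 1 (by omega), Nat.choose_one_right]; push_cast; ring),
          xiP_pos_eval m 1 ((p+p:ℕ):ℤ) (p:ℤ) ((p:ℤ)-1) ((p:ℤ)-1) (p:ℚ)
            (by omega) (by omega)
            (by rw [Int.ceil_eq_iff]; push_cast; constructor <;> linarith)
            (by omega) (by omega)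
            (by rw [B_eq _ p 1 (by omega), Nat.choose_one_right]),
          xiP_pos_eval m (p+p+1) _ ((n:ℤ)+1) (n:ℤ) ((n:ℤ)+p+p)
            ((n+(p+p)+1).choose ((p+p)+1) : ℚ)
            (by omega) (by omega)
            (by rw [Int.ceil_eq_iff]; push_cast; constructor <;> linarith)
            (by omega) (by omega) (B_eq _ (n+(p+p)+1) _ (by omega)),
          xiM_pos_eval m (p+p+1) _ ((n:ℤ)+1) ((n:ℤ)+1) (((n:ℤ)+p+p)+1)
            ((n+(p+p)+1).choose ((p+p)+1) : ℚ)
            (by omega) (by omega)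
            (by rw [Int.ceil_eq_iff]; push_cast; constructor <;> linarith)
            (by omega) (by omega) (B_eq _ (n+(p+p)+1) _ (by omega)),
          Pneg_bot (show (n:ℤ) ≤ (n:ℤ)+p+p by omega),
          Pneg_top (show (n:ℤ)+1 ≤ (n:ℤ)+p+p+1 by omega),
          Pneg_single ((p:ℤ)+n), Pneg_single ((p:ℤ)-1)]
      have key : ((n:Rpoly)+1) * ((n+(p+p)+1).choose (p+p) : ℕ) =
          ((p:Rpoly)+p+1) * ((n+(p+p)+1).choose ((p+p)+1) : ℕ) := by
        exact_mod_cast congrArg (Nat.cast (R := Rpoly)) (natI2 n (p+p))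
      push_cast [map_add, map_sub, map_one, map_mul, map_natCast, map_intCast, map_ofNat]
      linear_combination (Pneg ((n:ℤ)+1) ((n:ℤ)+p+p) *
        (-va + ((n:Rpoly)+p+p) * vd)) * key
  by_cases hB : t = ((p+p:ℕ):ℤ)
  · subst hB
    rw [sub_self, mul_zero, xiP_zero m (p+p+1) _ (by omega) (by omega),
      xiM_zero m (p+p+1) _ (by omega) (by omega)]
    ring
  by_cases hC : -((p+p:ℕ):ℤ) ≤ t
  · -- region C
    rw [xiP_zero m (p+p) t (by omega) (by omega), zero_mul,
      xiP_zero m (p+p+1) t (by omega) (by omega),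
      xiM_zero m (p+p+1) t (by omega) (by omega)]
    ring
  by_cases hD : t = -((p+p:ℕ):ℤ) - 1
  · subst hD
    rw [xiP_neg_eval m (p+p) _ 1 ((1:ℤ)+1) (1+((p:ℤ)+p)) 1
          (by omega) (by omega)
          (by rw [Int.ceil_eq_iff]; push_cast; constructor <;> linarith)
          (by omega) (by omega)
          (by rw [B_eq _ (p+p) _ (by omega)]; simp),
        xiP_neg_eval m 1 _ (p:ℤ) ((p:ℤ)+1) ((p:ℤ)+1) (p:ℚ)
          (by omega) (by omega)
          (by rw [Int.ceil_eq_iff]; push_cast; constructor <;> linarith)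
          (by omega) (by omega)
          (by rw [B_eq _ p 1 (by omega), Nat.choose_one_right]),
        xiP_pos_eval m 1 ((p+p:ℕ):ℤ) (p:ℤ) ((p:ℤ)-1) ((p:ℤ)-1) (p:ℚ)
          (by omega) (by omega)
          (by rw [Int.ceil_eq_iff]; push_cast; constructor <;> linarith)
          (by omega) (by omega)
          (by rw [B_eq _ p 1 (by omega), Nat.choose_one_right]),
        xiP_zero m (p+p+1) _ (by omega) (by omega),
        xiM_neg_eval m (p+p+1) _ 1 1 (1+((p:ℤ)+p)) 1
          (by omega) (by omega) (by omega)
          (by rw [Int.ceil_eq_iff]; push_cast; constructor <;> linarith)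
          (by omega) (by omega)
          (by rw [B_eq _ (p+p+1) _ (by omega)]; simp)]
    rw [Ppos_bot (show (1:ℤ) ≤ 1+((p:ℤ)+p) by omega),
        Ppos_single ((p:ℤ)+1), Pneg_single ((p:ℤ)-1)]
    push_cast [map_add, map_sub, map_one, map_mul, map_natCast, map_intCast, map_ofNat]
    ring
  · -- region E : t ≤ -(q+2)
    obtain ⟨u, hu⟩ : ∃ u : ℕ, t = -((p+p:ℕ):ℤ) - 2 - (u:ℤ) :=
      ⟨(-t - (p+p) - 2).toNat, by omega⟩
    rcases Nat.even_or_odd u with ⟨n, hn⟩ | ⟨n, hn⟩ <;> subst hn <;> subst hu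
    · -- E1 : -t = q + 2n + 2
      rw [xiP_neg_eval m (p+p) _ ((n:ℤ)+1) ((n:ℤ)+1+1) ((n:ℤ)+p+p+1)
            ((n+(p+p)).choose (p+p) : ℚ)
            (by omega) (by omega)
            (by rw [Int.ceil_eq_iff]; push_cast; constructor <;> linarith)
            (by omega) (by omega) (B_eq _ (n+(p+p)) _ (by omega)),
          xiP_neg_eval m 1 _ ((p:ℤ)+n+1) ((p:ℤ)+n+2) ((p:ℤ)+n+2) ((p:ℚ)+n+1)
            (by omega) (by omega)
            (by rw [Int.ceil_eq_iff]; push_cast; constructor <;> linarith)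
            (by omega) (by omega)
            (by rw [B_eq _ (p+n+1) 1 (by omega), Nat.choose_one_right]; push_cast; ring),
          xiP_pos_eval m 1 ((p+p:ℕ):ℤ) (p:ℤ) ((p:ℤ)-1) ((p:ℤ)-1) (p:ℚ)
            (by omega) (by omega)
            (by rw [Int.ceil_eq_iff]; push_cast; constructor <;> linarith)
            (by omega) (by omega)
            (by rw [B_eq _ p 1 (by omega), Nat.choose_one_right]),
          xiP_neg_eval m (p+p+1) _ ((n:ℤ)+1) ((n:ℤ)+1+1) (((n:ℤ)+p+p+1)+1)
            ((n+(p+p)+1).choose ((p+p)+1) : ℚ)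
            (by omega) (by omega)
            (by rw [Int.ceil_eq_iff]; push_cast; constructor <;> linarith)
            (by omega) (by omega) (B_eq _ (n+(p+p)+1) _ (by omega)),
          xiM_neg_eval m (p+p+1) _ ((n:ℤ)+1) ((n:ℤ)+1) ((n:ℤ)+p+p+1)
            ((n+(p+p)+1).choose ((p+p)+1) : ℚ)
            (by omega) (by omega) (by omega)
            (by rw [Int.ceil_eq_iff]; push_cast; constructor <;> linarith)
            (by omega) (by omega) (B_eq _ (n+(p+p)+1) _ (by omega))]
      rw [Ppos_top (show (n:ℤ)+1+1 ≤ (n:ℤ)+p+p+1+1 by omega),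
          Ppos_bot (show (n:ℤ)+1 ≤ (n:ℤ)+p+p+1 by omega),
          Ppos_single ((p:ℤ)+n+2), Pneg_single ((p:ℤ)-1)]
      have key : ((n:Rpoly)+(p:Rpoly)+p+1) * ((n+(p+p)).choose (p+p) : ℕ) =
          ((p:Rpoly)+p+1) * ((n+(p+p)+1).choose ((p+p)+1) : ℕ) := by
        have := congrArg (Nat.cast (R := Rpoly)) (natI2' n (p+p))
        push_cast at this
        linear_combination this
      push_cast [map_add, map_sub, map_one, map_mul, map_natCast, map_intCast, map_ofNat]
      linear_combination (Ppos ((n:ℤ)+1+1) ((n:ℤ)+p+p+1) *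
        (va + ((n:Rpoly)+2) * vd)) * key
    · -- E2 : -t = q + 2n + 3
      rw [xiP_neg_eval m (p+p) _ ((n:ℤ)+2) ((n:ℤ)+2+1) ((n:ℤ)+p+p+2)
            ((n+(p+p)+1).choose (p+p) : ℚ)
            (by omega) (by omega)
            (by rw [Int.ceil_eq_iff]; push_cast; constructor <;> linarith)
            (by omega) (by omega) (B_eq _ (n+(p+p)+1) _ (by omega)),
          xiP_neg_eval m 1 _ ((p:ℤ)+n+1) ((p:ℤ)+n+2) ((p:ℤ)+n+2) ((p:ℚ)+n+1)
            (by omega) (by omega)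
            (by rw [Int.ceil_eq_iff]; push_cast; constructor <;> linarith)
            (by omega) (by omega)
            (by rw [B_eq _ (p+n+1) 1 (by omega), Nat.choose_one_right]; push_cast; ring),
          xiP_pos_eval m 1 ((p+p:ℕ):ℤ) (p:ℤ) ((p:ℤ)-1) ((p:ℤ)-1) (p:ℚ)
            (by omega) (by omega)
            (by rw [Int.ceil_eq_iff]; push_cast; constructor <;> linarith)
            (by omega) (by omega)
            (by rw [B_eq _ p 1 (by omega), Nat.choose_one_right]),
          xiP_neg_eval m (p+p+1) _ ((n:ℤ)+1) ((n:ℤ)+2) ((n:ℤ)+p+p+2)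
            ((n+(p+p)+1).choose ((p+p)+1) : ℚ)
            (by omega) (by omega)
            (by rw [Int.ceil_eq_iff]; push_cast; constructor <;> linarith)
            (by omega) (by omega) (B_eq _ (n+(p+p)+1) _ (by omega)),
          xiM_neg_eval m (p+p+1) _ ((n:ℤ)+2) ((n:ℤ)+2) ((n:ℤ)+p+p+2)
            ((n+(p+p)+2).choose ((p+p)+1) : ℚ)
            (by omega) (by omega) (by omega)
            (by rw [Int.ceil_eq_iff]; push_cast; constructor <;> linarith)
            (by omega) (by omega) (B_eq _ (n+(p+p)+2) _ (by omega))]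
      rw [Ppos_bot (show (n:ℤ)+2 ≤ (n:ℤ)+p+p+2 by omega),
          Ppos_single ((p:ℤ)+n+2), Pneg_single ((p:ℤ)-1)]
      have key : ((p:Rpoly)+p+(n:Rpoly)+1) * ((n+(p+p)+1).choose (p+p) : ℕ) =
          ((n+(p+p)+1).choose ((p+p)+1) : ℕ) +
            ((p:Rpoly)+p) * ((n+(p+p)+2).choose ((p+p)+1) : ℕ) := by
        have := congrArg (Nat.cast (R := Rpoly)) (natI3 n (p+p))
        push_cast at this
        linear_combination this
      push_cast [map_add, map_sub, map_one, map_mul, map_natCast, map_intCast, map_ofNat]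
      linear_combination (Ppos ((n:ℤ)+2+1) ((n:ℤ)+p+p+2) *
        (va + ((n:Rpoly)+2) * vd)) * key
end
end
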